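/- arXiv:1506.04434 — 3 statements merged into one kernel-verified Lean document; each statement's English description precedes it below -/
import Mathlib

section
/- For every integer N ≥ 2 and every x ∈ ℝ^N, the gradient ∇V(x) vanishes if and only if x ∈ {O, I₊, I₋}. In particular, if x ∈ ℝ^N \ {O, I₊, I₋} then ∇V(x) ≠ 0. -/
open Real MeasureTheory Matrix Filter

noncomputable section

/-- The discrete Laplacian `K` as an `N × N` matrix:
`(Kx)_k = μ/(4 sin²(π/N)) (2 x_k − x_{k+1} − x_{k−1})` with periodic indices. -/
def Kdisc (μ : ℝ) (N : ℕ) : Matrix (Fin N) (Fin N) ℝ :=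
  Matrix.of fun k l =>
    μ / (4 * Real.sin (Real.pi / N) ^ 2) *
      ((if l = k then 2 else 0) - (if (l : ℕ) = ((k : ℕ) + 1) % N then 1 else 0)
        - (if (l : ℕ) = ((k : ℕ) + (N - 1)) % N then 1 else 0))

/-- The energy `V(x) = (1/4)Σ x_k⁴ + (1/2)⟨x,(K−I)x⟩ + N/4`. -/
def Venergy (μ : ℝ) (N : ℕ) (x : Fin N → ℝ) : ℝ :=
  (1 / 4) * ∑ k, x k ^ 4
    + (1 / 2) * ∑ k, x k * ((Kdisc μ N).mulVec x k - x k)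
    + N / 4

/-- The `k`-th partial derivative `∂_k φ(x)`. -/
def pgrad (N : ℕ) (φ : (Fin N → ℝ) → ℝ) (x : Fin N → ℝ) (k : Fin N) : ℝ :=
  fderiv ℝ φ x (Pi.single k 1)

/-- Squared Euclidean norm of the gradient `|∇φ(x)|²`. -/
def gradSq (N : ℕ) (φ : (Fin N → ℝ) → ℝ) (x : Fin N → ℝ) : ℝ :=
  ∑ k, pgrad N φ x k ^ 2

/-- The Laplacian `Δφ(x) = Σ_k ∂²_k φ(x)`. -/
def lapl (N : ℕ) (φ : (Fin N → ℝ) → ℝ) (x : Fin N → ℝ) : ℝ :=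
  ∑ k, fderiv ℝ (fun y => pgrad N φ y k) x (Pi.single k 1)

/-- The Hessian quadratic form `⟨w, Hess φ(x) w⟩`. -/
def hessQF (N : ℕ) (φ : (Fin N → ℝ) → ℝ) (x w : Fin N → ℝ) : ℝ :=
  fderiv ℝ (fun y => fderiv ℝ φ y w) x w

/-- The orthogonal projection `P` onto the span of `(1,…,1)`, as a matrix. -/
def Pmat (N : ℕ) : Matrix (Fin N) (Fin N) ℝ := Matrix.of fun _ _ => 1 / (N : ℝ)

/-- The unnormalised equilibrium density `e^{−V(x)/(hN)}`. -/
def dens (μ : ℝ) (N : ℕ) (h : ℝ) (x : Fin N → ℝ) : ℝ :=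
  Real.exp (-(Venergy μ N x) / (h * N))

/-- The rescaled potential `f(x) = V(√N x)/(2N)` of the Witten Laplacian. -/
def fWit (μ : ℝ) (N : ℕ) (x : Fin N → ℝ) : ℝ :=
  Venergy μ N (fun k => Real.sqrt N * x k) / (2 * N)

/-- The quasimode `χ(x) = (2/√(2πh)) ∫₀^{x̄} e^{−t²/(2h)} dt`. -/
def chiQ (N : ℕ) (h : ℝ) (x : Fin N → ℝ) : ℝ :=
  (2 / Real.sqrt (2 * Real.pi * h)) *
    ∫ t in (0:ℝ)..((1 / N) * ∑ j, x j), Real.exp (-t ^ 2 / (2 * h))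

/-- The matrix `αP + K + βI`. -/
def Mαβ (μ α β : ℝ) (N : ℕ) : Matrix (Fin N) (Fin N) ℝ :=
  α • Pmat N + Kdisc μ N + β • (1 : Matrix (Fin N) (Fin N) ℝ)

/-- The covariance matrix `Q = (αP + K + βI)⁻¹`. -/
def Qmat (μ α β : ℝ) (N : ℕ) : Matrix (Fin N) (Fin N) ℝ := (Mαβ μ α β N)⁻¹

/-- The generator `L_h φ = −hNΔφ + ∇V·∇φ`. -/
def Lop (μ : ℝ) (N : ℕ) (h : ℝ) (φ : (Fin N → ℝ) → ℝ) (x : Fin N → ℝ) : ℝ :=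
  -(h * N) * lapl N φ x + ∑ k, pgrad N (Venergy μ N) x k * pgrad N φ x k

end


-- ===================== auxiliary lemmas =====================
section Aux
open Real Complex Finset Matrix
variable {N : ℕ}

lemma fin_cond1 [NeZero N] (hN : 2 ≤ N) (k l : Fin N) :
    ((l : ℕ) = ((k : ℕ) + 1) % N) ↔ l = k + 1 := by
  rw [Fin.ext_iff, Fin.add_def, Fin.val_one']
  rw [Nat.mod_eq_of_lt (show 1 < N by omega)]

lemma fin_cond2 [NeZero N] (hN : 2 ≤ N) (k l : Fin N) :
    ((l : ℕ) = ((k : ℕ) + (N - 1)) % N) ↔ l = k - 1 := by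
  rw [Fin.ext_iff, Fin.sub_def, Fin.val_one']
  rw [Nat.mod_eq_of_lt (show 1 < N by omega), Nat.add_comm (N - 1) (k : ℕ)]

lemma Kdisc_apply [NeZero N] (μ : ℝ) (hN : 2 ≤ N) (k l : Fin N) :
    Kdisc μ N k l = μ / (4 * Real.sin (Real.pi / N) ^ 2) *
      ((if l = k then 2 else 0) - (if l = k + 1 then 1 else 0)
        - (if l = k - 1 then 1 else 0)) := by
  rw [Kdisc, Matrix.of_apply]
  rw [if_congr (fin_cond1 hN k l) rfl rfl, if_congr (fin_cond2 hN k l) rfl rfl]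

lemma Kdisc_mulVec [NeZero N] (μ : ℝ) (hN : 2 ≤ N) (y : Fin N → ℝ) (k : Fin N) :
    (Kdisc μ N).mulVec y k =
      μ / (4 * Real.sin (Real.pi / N) ^ 2) * (2 * y k - y (k + 1) - y (k - 1)) := by
  unfold Matrix.mulVec dotProduct
  have h : ∀ l : Fin N, Kdisc μ N k l * y l =
      μ / (4 * Real.sin (Real.pi / N) ^ 2) *
        (2 * (if l = k then y l else 0) - (if l = k + 1 then y l else 0)
          - (if l = k - 1 then y l else 0)) := by
    intro l
    rw [Kdisc_apply μ hN k l]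
    split_ifs <;> ring
  rw [Finset.sum_congr rfl fun l _ => h l, ← Finset.mul_sum]
  congr 1
  rw [Finset.sum_sub_distrib, Finset.sum_sub_distrib, ← Finset.mul_sum]
  simp only [Finset.sum_ite_eq' Finset.univ, Finset.mem_univ, if_true]

noncomputable def om (N : ℕ) : ℂ := Complex.exp (2 * Real.pi * Complex.I / N)

lemma om_ne_zero (N : ℕ) : om N ≠ 0 := Complex.exp_ne_zero _

lemma om_pow_N (N : ℕ) (hN : 1 ≤ N) : om N ^ (N : ℤ) = 1 := by
  have h : (N : ℂ) ≠ 0 := Nat.cast_ne_zero.mpr (by omega)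
  rw [om, _root_.zpow_natCast, ← Complex.exp_nat_mul, mul_div_cancel₀ _ h]
  simpa using Complex.exp_int_mul_two_pi_mul_I 1

lemma om_congr (N : ℕ) (hN : 1 ≤ N) {m n : ℤ} (h : (N:ℤ) ∣ (m - n)) : om N ^ m = om N ^ n := by
  obtain ⟨c, hc⟩ := h
  have : m = n + N * c := by linarith
  rw [this, _root_.zpow_add₀ (om_ne_zero N), _root_.zpow_mul, om_pow_N N hN, _root_.one_zpow, _root_.mul_one]

lemma om_zpow_eq_one_iff (N : ℕ) (hN : 1 ≤ N) (m : ℤ) : om N ^ m = 1 ↔ (N:ℤ) ∣ m :=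
  (Complex.isPrimitiveRoot_exp N (by omega)).zpow_eq_one_iff_dvd m

lemma om_sum (N : ℕ) (hN : 1 ≤ N) (m : ℤ) :
    ∑ j : Fin N, om N ^ ((j : ℤ) * m) = if (N:ℤ) ∣ m then (N : ℂ) else 0 := by
  have key : ∀ j : Fin N, om N ^ ((j:ℤ) * m) = (om N ^ m) ^ (j : ℕ) := fun j => by
    rw [mul_comm, _root_.zpow_mul, _root_.zpow_natCast]
  simp only [key]
  rw [Fin.sum_univ_eq_sum_range (fun i => (om N ^ m) ^ i)]
  split_ifs with h
  · rw [(om_zpow_eq_one_iff N hN m).mpr h]; simp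
  · have hne : om N ^ m ≠ 1 := fun hc => h ((om_zpow_eq_one_iff N hN m).mp hc)
    rw [geom_sum_eq hne]
    have : (om N ^ m) ^ N = 1 := by
      rw [← _root_.zpow_natCast, ← _root_.zpow_mul, mul_comm, _root_.zpow_mul, om_pow_N N hN, _root_.one_zpow]
    rw [this]; simp

lemma om_conj (N : ℕ) (m : ℤ) : (starRingEnd ℂ) (om N ^ m) = om N ^ (-m) := by
  have h : om N * (starRingEnd ℂ) (om N) = 1 := by
    rw [om, ← Complex.exp_conj, ← Complex.exp_add]
    have : (2 * (Real.pi:ℂ) * Complex.I / N) + (starRingEnd ℂ) (2 * (Real.pi:ℂ) * Complex.I / N) = 0 := by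
      rw [_root_.map_div₀, _root_.map_mul, _root_.map_mul, Complex.conj_I, Complex.conj_ofReal, _root_.map_ofNat, _root_.map_natCast]
      ring
    rw [this, Complex.exp_zero]
  rw [_root_.map_zpow₀, _root_.zpow_neg, ← _root_.inv_zpow]
  congr 1
  exact inv_eq_of_mul_eq_one_right h |>.symm

noncomputable def Fdft (N : ℕ) (y : Fin N → ℝ) (j : Fin N) : ℂ :=
  ∑ k : Fin N, (y k : ℂ) * om N ^ ((j : ℤ) * (k : ℤ))

lemma fin_dvd_iff (hN : 1 ≤ N) (k l : Fin N) : (N:ℤ) ∣ ((k:ℤ) - (l:ℤ)) ↔ l = k := by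
  constructor
  · intro h
    have hk := k.isLt; have hl := l.isLt
    have := Int.eq_zero_of_abs_lt_dvd h (by
      rw [abs_lt]; constructor <;> [push_cast; push_cast] <;> omega)
    have : (k:ℤ) = (l:ℤ) := by omega
    exact (Fin.ext (by exact_mod_cast this.symm))
  · rintro rfl; simp

lemma parseval (hN : 1 ≤ N) (y : Fin N → ℝ) :
    ∑ j : Fin N, Complex.normSq (Fdft N y j) = N * ∑ k, y k ^ 2 := by
  have key : ∑ j : Fin N, ((Complex.normSq (Fdft N y j) : ℂ)) = (N : ℂ) * ∑ k, (y k : ℂ)^2 := by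
    have e1 : ∀ j : Fin N, ((Complex.normSq (Fdft N y j) : ℂ)) =
        ∑ k : Fin N, ∑ l : Fin N, (y k : ℂ) * (y l : ℂ) * om N ^ ((j:ℤ) * ((k:ℤ) - (l:ℤ))) := by
      intro j
      rw [← Complex.mul_conj, Fdft, _root_.map_sum, Finset.sum_mul_sum]
      refine Finset.sum_congr rfl fun k _ => Finset.sum_congr rfl fun l _ => ?_
      rw [_root_.map_mul, Complex.conj_ofReal, om_conj]
      rw [mul_mul_mul_comm, ← _root_.zpow_add₀ (om_ne_zero N)]
      ring_nf
    simp only [e1]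
    rw [Finset.sum_comm]
    have e2 : ∀ k : Fin N, ∑ j : Fin N, ∑ l : Fin N,
        (y k : ℂ) * (y l : ℂ) * om N ^ ((j:ℤ) * ((k:ℤ) - (l:ℤ))) = (N:ℂ) * (y k : ℂ)^2 := by
      intro k
      rw [Finset.sum_comm]
      have e3 : ∀ l : Fin N, ∑ j : Fin N,
          (y k : ℂ) * (y l : ℂ) * om N ^ ((j:ℤ) * ((k:ℤ) - (l:ℤ)))
            = if l = k then (N:ℂ) * (y k:ℂ)^2 else 0 := by
        intro l
        rw [← Finset.mul_sum, om_sum N hN]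
        rw [if_congr (fin_dvd_iff hN k l) rfl rfl]
        split_ifs with h
        · subst h; ring
        · ring
      rw [Finset.sum_congr rfl fun l _ => e3 l]
      simp
    rw [Finset.sum_congr rfl fun k _ => e2 k, ← Finset.mul_sum]
  rw [← Complex.ofReal_inj]
  push_cast
  convert key using 2

lemma nat_mod_dvd_int (a N : ℕ) : (N:ℤ) ∣ (((a % N : ℕ) : ℤ) - (a : ℤ)) := by
  rw [Int.natCast_mod, Int.emod_def]
  exact ⟨-((a:ℤ)/N), by ring⟩

lemma fdft_shift [NeZero N] (hN : 1 ≤ N) (y : Fin N → ℝ) (j : Fin N) :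
    Fdft N (fun k => y (k + 1) - y k) j = (om N ^ (-(j:ℤ)) - 1) * Fdft N y j := by
  have e1 : Fdft N (fun k => y (k + 1) - y k) j
      = (∑ k : Fin N, (y (k+1) : ℂ) * om N ^ ((j:ℤ) * (k:ℤ))) - Fdft N y j := by
    rw [Fdft, Fdft, ← Finset.sum_sub_distrib]
    refine Finset.sum_congr rfl fun k _ => ?_
    push_cast
    ring
  have e2 : (∑ k : Fin N, (y (k+1) : ℂ) * om N ^ ((j:ℤ) * (k:ℤ)))
      = om N ^ (-(j:ℤ)) * Fdft N y j := by
    rw [Fdft, Finset.mul_sum]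
    refine Fintype.sum_equiv (Equiv.addRight (1 : Fin N))
      _ _ fun k => ?_
    simp only [Equiv.coe_addRight]
    have hval : ((k + 1 : Fin N) : ℕ) = ((k:ℕ) + 1) % N := by
      rw [Fin.val_add, Fin.val_one']
      conv_rhs => rw [Nat.add_mod, Nat.mod_eq_of_lt k.isLt]
    have hexp : om N ^ ((j:ℤ) * (k:ℤ)) = om N ^ (-(j:ℤ) + (j:ℤ) * (((k + 1 : Fin N) : ℕ) : ℤ)) := by
      apply om_congr N hN
      have h2 := nat_mod_dvd_int ((k:ℕ) + 1) N
      rw [← hval] at h2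
      have heq : (j:ℤ) * (k:ℤ) - (-(j:ℤ) + (j:ℤ) * (((k + 1 : Fin N) : ℕ) : ℤ))
          = -(j:ℤ) * ((((k + 1 : Fin N) : ℕ) : ℤ) - (((k:ℕ) : ℤ) + 1)) := by push_cast; ring
      rw [heq]
      exact Dvd.dvd.mul_left (by exact_mod_cast h2) _
    rw [hexp, _root_.zpow_add₀ (om_ne_zero N)]
    ring
  rw [e1, e2]
  ring

lemma fdft_zero_eq_sum [NeZero N] (y : Fin N → ℝ) :
    Fdft N y 0 = ((∑ k, y k : ℝ) : ℂ) := by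
  rw [Fdft]
  push_cast
  refine Finset.sum_congr rfl fun k _ => ?_
  have : ((0 : Fin N) : ℤ) = 0 := by simp
  rw [this, zero_mul, _root_.zpow_zero, _root_.mul_one]

lemma normSq_om_sub_one (hN : 1 ≤ N) (j : Fin N) :
    Complex.normSq (om N ^ (-(j:ℤ)) - 1) = 4 * Real.sin (Real.pi * j / N) ^ 2 := by
  have hNr : (N:ℝ) ≠ 0 := Nat.cast_ne_zero.mpr (by omega)
  have e1 : om N ^ (-(j:ℤ)) = Complex.exp ((((-(2 * Real.pi * j / N)) : ℝ) : ℂ) * Complex.I) := by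
    rw [om, ← Complex.exp_int_mul]
    congr 1
    push_cast
    field_simp
  rw [e1, Complex.normSq_apply, Complex.sub_re, Complex.sub_im, Complex.exp_ofReal_mul_I_re,
    Complex.exp_ofReal_mul_I_im, Complex.one_re, Complex.one_im]
  have hθ : -(2 * Real.pi * j / N) = -(2 * (Real.pi * j / N)) := by ring
  rw [hθ, Real.cos_neg, Real.sin_neg]
  linear_combination Real.sin_sq_add_cos_sq (2*(Real.pi * j / N)) - 2 * Real.cos_two_mul (Real.pi * j / N) - 4 * Real.sin_sq_add_cos_sq (Real.pi * j / N)

lemma sin_ge [NeZero N] (hN : 2 ≤ N) (j : Fin N) (hj : j ≠ 0) :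
    Real.sin (Real.pi / N) ≤ Real.sin (Real.pi * j / N) := by
  have hNr : (0:ℝ) < N := by positivity
  have hj1 : 1 ≤ (j:ℕ) := by
    rcases Nat.eq_zero_or_pos (j:ℕ) with h | h
    · exact absurd (Fin.ext (by simp [h])) hj
    · omega
  have hjN : (j:ℕ) ≤ N - 1 := by have := j.isLt; omega
  have hpi := Real.pi_pos
  have main : ∀ i : ℕ, 1 ≤ i → 2 * i ≤ N → Real.sin (Real.pi / N) ≤ Real.sin (Real.pi * i / N) := by
    intro i h1 h2
    have hi1 : (1:ℝ) ≤ (i:ℝ) := by exact_mod_cast h1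
    have hi2 : (2 * i : ℝ) ≤ (N:ℝ) := by exact_mod_cast h2
    apply Real.sin_le_sin_of_le_of_le_pi_div_two
    · have : 0 < Real.pi / N := by positivity
      linarith
    · rw [div_le_div_iff₀ hNr (by norm_num : (0:ℝ) < 2)]
      linarith [mul_le_mul_of_nonneg_left hi2 hpi.le]
    · rw [div_le_div_iff₀ hNr hNr]
      linarith [mul_le_mul_of_nonneg_right (mul_le_mul_of_nonneg_left hi1 hpi.le) hNr.le]
  rcases le_or_gt (2 * (j:ℕ)) N with h | h
  · exact main (j:ℕ) hj1 h
  · have hsub : Real.sin (Real.pi * j / N) = Real.sin (Real.pi * ((N:ℕ) - (j:ℕ) : ℕ) / N) := by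
      rw [← Real.sin_pi_sub]
      congr 1
      have hc : (((N:ℕ) - (j:ℕ) : ℕ) : ℝ) = (N:ℝ) - (j:ℝ) := by
        have : (j:ℕ) ≤ N := by omega
        push_cast [Nat.cast_sub this]
        ring
      rw [hc]
      field_simp
    rw [hsub]
    exact main ((N:ℕ) - (j:ℕ)) (by omega) (by omega)

lemma wirtinger (hN : 2 ≤ N) (y : Fin N → ℝ) (hy : ∑ k, y k = 0) :
    haveI : NeZero N := ⟨by omega⟩
    4 * Real.sin (Real.pi / N) ^ 2 * ∑ k, y k ^ 2 ≤ ∑ k : Fin N, (y (k + 1) - y k) ^ 2 := by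
  haveI : NeZero N := ⟨by omega⟩
  have hN1 : 1 ≤ N := by omega
  have hNr : (0:ℝ) < N := by positivity
  have key : (N:ℝ) * ∑ k : Fin N, (y (k + 1) - y k) ^ 2
      = ∑ j : Fin N, Complex.normSq (om N ^ (-(j:ℤ)) - 1) * Complex.normSq (Fdft N y j) := by
    rw [← parseval hN1 (fun k => y (k+1) - y k)]
    refine Finset.sum_congr rfl fun j _ => ?_
    rw [fdft_shift hN1 y j, Complex.normSq_mul]
  have bound : ∀ j : Fin N,
      4 * Real.sin (Real.pi / N) ^ 2 * Complex.normSq (Fdft N y j)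
        ≤ Complex.normSq (om N ^ (-(j:ℤ)) - 1) * Complex.normSq (Fdft N y j) := by
    intro j
    by_cases hj : j = 0
    · subst hj
      rw [fdft_zero_eq_sum y, hy]
      simp
    · apply mul_le_mul_of_nonneg_right _ (Complex.normSq_nonneg _)
      rw [normSq_om_sub_one hN1 j]
      have h1 : 0 ≤ Real.sin (Real.pi / N) := by
        apply Real.sin_nonneg_of_nonneg_of_le_pi
        · positivity
        · rw [div_le_iff₀ hNr]
          have h2 : (1:ℝ) ≤ (N:ℝ) := by exact_mod_cast hN1
          nlinarith [Real.pi_pos]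
      have := sin_ge hN j hj
      nlinarith
  calc 4 * Real.sin (Real.pi / N) ^ 2 * ∑ k, y k ^ 2
      = (1/(N:ℝ)) * ∑ j : Fin N, 4 * Real.sin (Real.pi / N) ^ 2 * Complex.normSq (Fdft N y j) := by
        rw [← Finset.mul_sum, parseval hN1 y]
        field_simp
    _ ≤ (1/(N:ℝ)) * ∑ j : Fin N, Complex.normSq (om N ^ (-(j:ℤ)) - 1) * Complex.normSq (Fdft N y j) := by
        apply mul_le_mul_of_nonneg_left (Finset.sum_le_sum fun j _ => bound j) (by positivity)
    _ = ∑ k : Fin N, (y (k + 1) - y k) ^ 2 := by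
        rw [← key]
        field_simp

noncomputable def Aclm (μ : ℝ) (N : ℕ) : (Fin N → ℝ) →L[ℝ] (Fin N → ℝ) :=
  LinearMap.toContinuousLinearMap ((Kdisc μ N).mulVecLin)

noncomputable def Pj (N : ℕ) (k : Fin N) : (Fin N → ℝ) →L[ℝ] ℝ :=
  ContinuousLinearMap.proj k

noncomputable def Dtot (μ : ℝ) (N : ℕ) (x : Fin N → ℝ) : (Fin N → ℝ) →L[ℝ] ℝ :=
  (1/4 : ℝ) • (∑ k, ((4:ℝ) * x k ^ 3) • Pj N k)
    + (1/2 : ℝ) • (∑ k, (x k • ((Pj N k).comp (Aclm μ N) - Pj N k)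
        + ((Kdisc μ N).mulVec x k - x k) • Pj N k))

lemma venergy_hasFDerivAt (μ : ℝ) (x : Fin N → ℝ) :
    HasFDerivAt (Venergy μ N) (Dtot μ N x) x := by
  have h1 : HasFDerivAt (fun y : Fin N → ℝ => ∑ k, y k ^ 4)
      (∑ k, ((4:ℝ) * x k ^ 3) • Pj N k) x := by
    apply HasFDerivAt.fun_sum
    intro k _
    have hproj : HasFDerivAt (fun y : Fin N → ℝ => y k) (Pj N k) x :=
      (Pj N k).hasFDerivAt
    have h0 := (hproj.fun_mul hproj).fun_mul (hproj.fun_mul hproj)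
    have heq : (fun y : Fin N → ℝ => y k ^ 4) = fun y => (y k * y k) * (y k * y k) := by
      funext y; ring
    rw [heq]
    refine h0.congr_fderiv ?_
    refine ContinuousLinearMap.ext fun w => ?_
    simp [Pj]
    ring
  have h2 : HasFDerivAt (fun y : Fin N → ℝ => ∑ k, y k * ((Kdisc μ N).mulVec y k - y k))
      (∑ k, (x k • ((Pj N k).comp (Aclm μ N) - Pj N k)
        + ((Kdisc μ N).mulVec x k - x k) • Pj N k)) x := by
    apply HasFDerivAt.fun_sum
    intro k _
    have hproj : HasFDerivAt (fun y : Fin N → ℝ => y k) (Pj N k) x :=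
      (Pj N k).hasFDerivAt
    have hA : HasFDerivAt (fun y : Fin N → ℝ => (Kdisc μ N).mulVec y k)
        ((Pj N k).comp (Aclm μ N)) x := ((Pj N k).comp (Aclm μ N)).hasFDerivAt
    have hg : HasFDerivAt (fun y : Fin N → ℝ => (Kdisc μ N).mulVec y k - y k)
        ((Pj N k).comp (Aclm μ N) - Pj N k) x := hA.sub hproj
    exact hproj.mul hg
  have : HasFDerivAt (Venergy μ N) ((1/4 : ℝ) • (∑ k, ((4:ℝ) * x k ^ 3) • Pj N k)
    + (1/2 : ℝ) • (∑ k, (x k • ((Pj N k).comp (Aclm μ N) - Pj N k)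
        + ((Kdisc μ N).mulVec x k - x k) • Pj N k))) x := by
    have := ((h1.const_mul (1/4 : ℝ)).add (h2.const_mul (1/2 : ℝ))).add_const ((N : ℝ)/4)
    exact this
  exact this

lemma Kdisc_symm_entry (μ : ℝ) (hN : 2 ≤ N) (k l : Fin N) :
    Kdisc μ N l k = Kdisc μ N k l := by
  haveI : NeZero N := ⟨by omega⟩
  rw [Kdisc_apply μ hN l k, Kdisc_apply μ hN k l]
  congr 1
  have e1 : (k = l + 1) ↔ (l = k - 1) := by
    constructor
    · rintro rfl; simp
    · rintro rfl; simp
  have e2 : (k = l - 1) ↔ (l = k + 1) := by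
    constructor
    · rintro rfl; simp
    · rintro rfl; simp
  have e3 : (k = l) ↔ (l = k) := eq_comm
  rw [if_congr e3 rfl rfl, if_congr e1 rfl rfl, if_congr e2 rfl rfl]
  ring

lemma pgrad_venergy (μ : ℝ) (hN : 2 ≤ N) (x : Fin N → ℝ) (k : Fin N) :
    pgrad N (Venergy μ N) x k = x k ^ 3 + (Kdisc μ N).mulVec x k - x k := by
  rw [pgrad, (venergy_hasFDerivAt μ x).fderiv]
  rw [Dtot]
  simp only [ContinuousLinearMap.add_apply, ContinuousLinearMap.smul_apply,
    ContinuousLinearMap.sum_apply, ContinuousLinearMap.coe_sub', Pi.sub_apply,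
    ContinuousLinearMap.coe_comp', Function.comp_apply, Pj, ContinuousLinearMap.proj_apply,
    smul_eq_mul, Aclm, LinearMap.coe_toContinuousLinearMap', Matrix.mulVecLin_apply]
  have hsingle : ∀ l : Fin N, (Pi.single k (1:ℝ) : Fin N → ℝ) l = if l = k then 1 else 0 := by
    intro l; simp [Pi.single_apply]
  have hmv : ∀ l : Fin N, (Kdisc μ N).mulVec (Pi.single k 1) l = Kdisc μ N l k := by
    intro l
    simp [Matrix.mulVec, dotProduct_single]
  simp only [hsingle, hmv]
  have hs : ∀ l, Kdisc μ N l k = Kdisc μ N k l := fun l => Kdisc_symm_entry μ hN k l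
  simp only [hs, mul_sub, mul_ite, _root_.mul_one, mul_zero, sub_mul, ite_mul, one_mul, zero_mul]
  rw [Finset.sum_add_distrib, Finset.sum_sub_distrib]
  simp only [Finset.sum_ite_eq' Finset.univ, Finset.mem_univ, if_true]
  have hKx : (Kdisc μ N).mulVec x k = ∑ l, Kdisc μ N k l * x l := rfl
  rw [hKx]
  rw [Finset.sum_congr rfl fun l _ => mul_comm (x l) (Kdisc μ N k l)]
  ring

lemma quad_identity [NeZero N] (μ : ℝ) (hN : 2 ≤ N) (y : Fin N → ℝ) :
    ∑ k, y k * (Kdisc μ N).mulVec y k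
      = μ / (4 * Real.sin (Real.pi / N) ^ 2) * ∑ k : Fin N, (y (k + 1) - y k) ^ 2 := by
  have hsq : ∑ k : Fin N, (y (k+1))^2 = ∑ k, (y k)^2 :=
    Fintype.sum_equiv (Equiv.addRight (1 : Fin N)) (fun k => (y (k+1))^2) (fun m => (y m)^2)
      (fun k => rfl)
  have hcross : ∑ k : Fin N, y k * y (k-1) = ∑ k : Fin N, y (k+1) * y k :=
    (Fintype.sum_equiv (Equiv.addRight (1 : Fin N)) (fun k => y (k+1) * y k)
      (fun m => y m * y (m-1)) (fun k => by simp)).symm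
  have hL : ∀ k, y k * (Kdisc μ N).mulVec y k
      = μ / (4 * Real.sin (Real.pi / N) ^ 2)
        * (2 * y k ^ 2 - y k * y (k+1) - y k * y (k-1)) := by
    intro k
    rw [Kdisc_mulVec μ hN y k]
    ring
  rw [Finset.sum_congr rfl fun k _ => hL k, ← Finset.mul_sum]
  congr 1
  have hmul : ∑ k : Fin N, y k * y (k+1) = ∑ k : Fin N, y (k+1) * y k :=
    Finset.sum_congr rfl fun k _ => mul_comm _ _
  have h1 : ∑ k : Fin N, (y (k+1) - y k)^2
      = ∑ k : Fin N, (y (k+1))^2 + ∑ k, y k ^2 - 2 * ∑ k : Fin N, y (k+1) * y k := by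
    rw [Finset.mul_sum, ← Finset.sum_add_distrib, ← Finset.sum_sub_distrib]
    exact Finset.sum_congr rfl fun k _ => by ring
  have h2 : ∑ k : Fin N, (2 * y k ^ 2 - y k * y (k+1) - y k * y (k-1))
      = 2 * ∑ k, y k ^2 - ∑ k : Fin N, y k * y (k+1) - ∑ k : Fin N, y k * y (k-1) := by
    rw [Finset.mul_sum, ← Finset.sum_sub_distrib, ← Finset.sum_sub_distrib]
  rw [h2, h1, hsq, hcross, hmul]
  ring

lemma chebyshev_sum (x : Fin N → ℝ) :
    (∑ k, x k) * (∑ k, x k ^ 3) ≤ N * ∑ k, x k ^ 4 := by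
  have hmono : Monovary x (fun k => x k ^ 3) := by
    intro i j h
    by_contra hc
    push_neg at hc
    have : x j ^ 3 < x i ^ 3 := by
      have hodd : Odd 3 := ⟨1, by norm_num⟩
      exact hodd.strictMono_pow (R := ℝ) hc
    simp at h
    linarith
  have := hmono.sum_mul_sum_le_card_mul_sum
  have hcard : (Fintype.card (Fin N)) = N := Fintype.card_fin N
  calc (∑ k, x k) * (∑ k, x k ^ 3) ≤ ((Fintype.card (Fin N) : ℝ)) * ∑ k, x k * x k ^ 3 := this
    _ = N * ∑ k, x k ^ 4 := by
        rw [show ((Fintype.card (Fin N) : ℝ)) = (N:ℝ) by simp]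
        congr 1
        exact Finset.sum_congr rfl fun k _ => by ring
end Aux

/-- the only critical points of `V` are `O = 0`, `I₊ = (1,…,1)`
and `I₋ = (−1,…,−1)`: the gradient `∇V(x)` vanishes iff `x ∈ {O, I₊, I₋}`. -/
theorem critical_points_of_V (μ : ℝ) (hμ : 1 < μ) (N : ℕ) (hN : 2 ≤ N)
    (x : Fin N → ℝ) :
    (∀ k, pgrad N (Venergy μ N) x k = 0) ↔
      (x = fun _ => 0) ∨ (x = fun _ => 1) ∨ (x = fun _ => -1) := by
  haveI : NeZero N := ⟨by omega⟩
  have hNr : (0:ℝ) < N := by positivity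
  have hN2 : (2:ℝ) ≤ N := by exact_mod_cast hN
  have hsin : 0 < Real.sin (Real.pi / N) := by
    apply Real.sin_pos_of_pos_of_lt_pi
    · positivity
    · rw [div_lt_iff₀ hNr]
      nlinarith [Real.pi_pos]
  have hc : 0 < μ / (4 * Real.sin (Real.pi / N) ^ 2) := by
    apply div_pos (by linarith)
    positivity
  constructor
  · intro hg
    have hgrad : ∀ k, x k ^ 3 + (Kdisc μ N).mulVec x k - x k = 0 := fun k => by
      rw [← pgrad_venergy μ hN x k]; exact hg k
    set m : ℝ := (∑ k, x k) / N with hm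
    set y : Fin N → ℝ := fun k => x k - m with hy
    have hxk : ∀ k, x k = y k + m := fun k => by simp [hy]
    have hysum : ∑ k, y k = 0 := by
      simp only [hy]
      rw [Finset.sum_sub_distrib, Finset.sum_const, Finset.card_univ, Fintype.card_fin,
        nsmul_eq_mul, hm]
      field_simp
      ring
    have hKconst : ∀ k, (Kdisc μ N).mulVec (fun _ => m) k = 0 := fun k => by
      rw [Kdisc_mulVec μ hN]; ring
    have hKx : ∀ k, (Kdisc μ N).mulVec x k = (Kdisc μ N).mulVec y k := by
      intro k
      have hxfun : x = y + (fun _ => m) := funext fun k => by rw [hxk k]; rfl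
      rw [hxfun, Matrix.mulVec_add]
      have : ((Kdisc μ N).mulVec y + (Kdisc μ N).mulVec fun _ => m) k
          = (Kdisc μ N).mulVec y k + (Kdisc μ N).mulVec (fun _ => m) k := rfl
      rw [this, hKconst k, add_zero]
    have hzero : ∑ k, (x k ^ 3 + (Kdisc μ N).mulVec x k - x k) * y k = 0 :=
      Finset.sum_eq_zero fun k _ => by rw [hgrad k]; ring
    have hexp : ∑ k, (x k ^ 3 + (Kdisc μ N).mulVec x k - x k) * y k
        = ∑ k, x k ^ 3 * y k + ∑ k, y k * (Kdisc μ N).mulVec y k - ∑ k, x k * y k := by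
      rw [← Finset.sum_add_distrib, ← Finset.sum_sub_distrib]
      refine Finset.sum_congr rfl fun k _ => ?_
      rw [hKx k]; ring
    have hxy : ∑ k, x k * y k = ∑ k, y k ^ 2 := by
      have : ∀ k, x k * y k = y k ^ 2 + m * y k := fun k => by rw [hxk k]; ring
      rw [Finset.sum_congr rfl fun k _ => this k, Finset.sum_add_distrib, ← Finset.mul_sum,
        hysum]
      ring
    have hx3y : 0 ≤ ∑ k, x k ^ 3 * y k := by
      have hcheb := chebyshev_sum x
      have hrw : ∑ k, x k ^ 3 * y k = ∑ k, x k ^ 4 - m * ∑ k, x k ^ 3 := by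
        have : ∀ k, x k ^ 3 * y k = x k ^ 4 - m * x k ^ 3 := fun k => by
          simp only [hy]; ring
        rw [Finset.sum_congr rfl fun k _ => this k, Finset.sum_sub_distrib, ← Finset.mul_sum]
      rw [hrw, sub_nonneg, hm, div_mul_eq_mul_div, div_le_iff₀ hNr]
      linarith
    have hquad : μ * ∑ k, y k ^ 2 ≤ ∑ k, y k * (Kdisc μ N).mulVec y k := by
      rw [quad_identity μ hN y]
      have hw := wirtinger hN y hysum
      calc μ * ∑ k, y k ^ 2
          = μ / (4 * Real.sin (Real.pi / N) ^ 2)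
              * (4 * Real.sin (Real.pi / N) ^ 2 * ∑ k, y k ^ 2) := by
            field_simp
        _ ≤ μ / (4 * Real.sin (Real.pi / N) ^ 2) * ∑ k : Fin N, (y (k + 1) - y k) ^ 2 :=
            mul_le_mul_of_nonneg_left hw hc.le
    have hy2 : ∑ k, y k ^ 2 ≤ 0 := by
      rw [hexp, hxy] at hzero
      nlinarith
    have hyz : ∀ k, y k = 0 := by
      intro k
      have hnn : ∀ j ∈ Finset.univ, (0:ℝ) ≤ y j ^ 2 := fun j _ => sq_nonneg _
      have hsum0 : ∑ k, y k ^ 2 = 0 := le_antisymm hy2 (Finset.sum_nonneg hnn)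
      have := (Finset.sum_eq_zero_iff_of_nonneg hnn).mp hsum0 k (Finset.mem_univ k)
      exact pow_eq_zero_iff (by norm_num) |>.mp this
    have hxm : ∀ k, x k = m := fun k => by rw [hxk k, hyz k, zero_add]
    have hKy0 : (Kdisc μ N).mulVec y ⟨0, by omega⟩ = 0 := by
      rw [Kdisc_mulVec μ hN, hyz, hyz, hyz]
      ring
    have hm3 : m ^ 3 - m = 0 := by
      have h := hgrad ⟨0, by omega⟩
      rw [hKx, hKy0, hxm ⟨0, by omega⟩] at h
      linarith
    have hfact : m * ((m - 1) * (m + 1)) = 0 := by linear_combination hm3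
    rcases mul_eq_zero.mp hfact with h | h
    · exact Or.inl (funext fun k => by rw [hxm k, h])
    · rcases mul_eq_zero.mp h with h | h
      · exact Or.inr (Or.inl (funext fun k => by rw [hxm k]; linarith))
      · exact Or.inr (Or.inr (funext fun k => by rw [hxm k]; linarith))
  · intro h
    have hval : ∀ (v : ℝ), v ^ 3 - v = 0 →
        ∀ k, pgrad N (Venergy μ N) ((fun _ => v) : Fin N → ℝ) k = 0 := by
      intro v hv k
      rw [pgrad_venergy μ hN _ k, Kdisc_mulVec μ hN]
      show v ^ 3 + μ / (4 * Real.sin (Real.pi / N) ^ 2) * (2 * v - v - v) - v = 0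
      linear_combination hv
    rcases h with h | h | h <;> subst h
    · exact hval 0 (by norm_num)
    · exact hval 1 (by norm_num)
    · exact hval (-1) (by norm_num)
end

section
/- For every x ∈ ℝ^N and every w ∈ ℝ^N with Σ_{k=1}^N w_k = 0 (i.e. w orthogonal to the constant vectors), one has ⟨w, Hess V(x) w⟩ ≥ (μ − 1) ‖w‖². -/
open Real MeasureTheory Matrix Filter

noncomputable section
namespace HessAux
variable {N : ℕ}

def projCLM (N : ℕ) (k : Fin N) : (Fin N → ℝ) →L[ℝ] ℝ := ContinuousLinearMap.proj k

def Bclm (M : Matrix (Fin N) (Fin N) ℝ) : (Fin N → ℝ) →L[ℝ] (Fin N → ℝ) :=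
  LinearMap.toContinuousLinearMap (Matrix.mulVecLin M) - ContinuousLinearMap.id ℝ (Fin N → ℝ)

lemma Bclm_apply (M : Matrix (Fin N) (Fin N) ℝ) (y : Fin N → ℝ) (k : Fin N) :
    Bclm M y k = M.mulVec y k - y k := rfl

lemma hasF_pow4 (k : Fin N) (y : Fin N → ℝ) :
    HasFDerivAt (fun z : Fin N → ℝ => z k ^ 4) ((4 * y k ^ 3) • projCLM N k) y := by
  have h : HasFDerivAt (fun z : Fin N → ℝ => z k) (projCLM N k) y :=
    (projCLM N k).hasFDerivAt
  have h4 := ((h.fun_mul h).fun_mul h).fun_mul h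
  have e : (fun z : Fin N → ℝ => z k ^ 4) = fun z => ((z k * z k) * z k) * z k := by
    funext z; ring
  rw [e]
  refine h4.congr_fderiv ?_
  ext v
  simp [projCLM]
  ring

lemma hasF_quad (M : Matrix (Fin N) (Fin N) ℝ) (k : Fin N) (y : Fin N → ℝ) :
    HasFDerivAt (fun z : Fin N → ℝ => z k * (M.mulVec z k - z k))
      (y k • ((projCLM N k).comp (Bclm M)) + (M.mulVec y k - y k) • projCLM N k) y := by
  have h : HasFDerivAt (fun z : Fin N → ℝ => z k) (projCLM N k) y :=
    (projCLM N k).hasFDerivAt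
  have g : HasFDerivAt (fun z : Fin N → ℝ => M.mulVec z k - z k)
      ((projCLM N k).comp (Bclm M)) y := ((projCLM N k).comp (Bclm M)).hasFDerivAt
  exact h.mul g




lemma hasF_V (μ : ℝ) (N : ℕ) (y : Fin N → ℝ) :
    HasFDerivAt (Venergy μ N)
      ((1/4 : ℝ) • (∑ k, (4 * y k ^ 3) • projCLM N k)
        + (1/2 : ℝ) • (∑ k, (y k • ((projCLM N k).comp (Bclm (Kdisc μ N)))
            + ((Kdisc μ N).mulVec y k - y k) • projCLM N k))) y := by
  have h1 : HasFDerivAt (fun z : Fin N → ℝ => ∑ k, z k ^ 4)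
      (∑ k, (4 * y k ^ 3) • projCLM N k) y := HasFDerivAt.fun_sum fun k _ => hasF_pow4 k y
  have h2 : HasFDerivAt (fun z : Fin N → ℝ => ∑ k, z k * ((Kdisc μ N).mulVec z k - z k))
      (∑ k, (y k • ((projCLM N k).comp (Bclm (Kdisc μ N)))
            + ((Kdisc μ N).mulVec y k - y k) • projCLM N k)) y :=
    HasFDerivAt.fun_sum fun k _ => hasF_quad (Kdisc μ N) k y
  have := ((h1.const_mul (1/4 : ℝ)).add (h2.const_mul (1/2 : ℝ))).add_const ((N : ℝ)/4)
  exact this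

lemma fderiv_V (μ : ℝ) (N : ℕ) (y w : Fin N → ℝ) :
    fderiv ℝ (Venergy μ N) y w
      = (1/4) * ∑ k, 4 * y k ^ 3 * w k
        + (1/2) * ∑ k, (y k * ((Kdisc μ N).mulVec w k - w k)
            + ((Kdisc μ N).mulVec y k - y k) * w k) := by
  rw [(hasF_V μ N y).fderiv]
  simp [projCLM, Bclm_apply, Finset.mul_sum, mul_comm]

lemma hasF_cube (k : Fin N) (c : ℝ) (y : Fin N → ℝ) :
    HasFDerivAt (fun z : Fin N → ℝ => z k ^ 3 * c) ((3 * y k ^ 2 * c) • projCLM N k) y := by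
  have h : HasFDerivAt (fun z : Fin N → ℝ => z k) (projCLM N k) y :=
    (projCLM N k).hasFDerivAt
  have h3 := (((h.fun_mul h).fun_mul h)).mul_const c
  have e : (fun z : Fin N → ℝ => z k ^ 3 * c) = fun z => ((z k * z k) * z k) * c := by
    funext z; ring
  rw [e]
  refine h3.congr_fderiv ?_
  ext v
  simp [projCLM]
  ring

lemma hessQF_V (μ : ℝ) (N : ℕ) (x w : Fin N → ℝ) :
    hessQF N (Venergy μ N) x w
      = 3 * ∑ k, x k ^ 2 * w k ^ 2 + ∑ k, w k * ((Kdisc μ N).mulVec w k - w k) := by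
  classical
  set M := Kdisc μ N with hM
  have e : (fun y => fderiv ℝ (Venergy μ N) y w)
      = fun y => (1/4) * ∑ k, 4 * y k ^ 3 * w k
        + (1/2) * ∑ k, (y k * (M.mulVec w k - w k) + (M.mulVec y k - y k) * w k) := by
    funext y; exact fderiv_V μ N y w
  have h1 : HasFDerivAt (fun y : Fin N → ℝ => ∑ k, 4 * y k ^ 3 * w k)
      (∑ k, (4 * (3 * x k ^ 2 * w k)) • projCLM N k) x := by
    refine HasFDerivAt.fun_sum fun k _ => ?_
    have := (hasF_cube k (w k) x).const_mul (4 : ℝ)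
    simpa [smul_smul, mul_assoc] using this
  have h2 : HasFDerivAt
      (fun y : Fin N → ℝ => ∑ k, (y k * (M.mulVec w k - w k) + (M.mulVec y k - y k) * w k))
      (∑ k, ((M.mulVec w k - w k) • projCLM N k
        + w k • ((projCLM N k).comp (Bclm M)))) x := by
    refine HasFDerivAt.fun_sum fun k _ => ?_
    have ha : HasFDerivAt (fun y : Fin N → ℝ => y k * (M.mulVec w k - w k))
        ((M.mulVec w k - w k) • projCLM N k) x := by
      have h : HasFDerivAt (fun z : Fin N → ℝ => z k) (projCLM N k) x :=
        (projCLM N k).hasFDerivAt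
      exact h.mul_const (M.mulVec w k - w k)
    have hb : HasFDerivAt (fun y : Fin N → ℝ => (M.mulVec y k - y k) * w k)
        (w k • ((projCLM N k).comp (Bclm M))) x := by
      have g : HasFDerivAt (fun z : Fin N → ℝ => M.mulVec z k - z k)
          ((projCLM N k).comp (Bclm M)) x := ((projCLM N k).comp (Bclm M)).hasFDerivAt
      exact g.mul_const (w k)
    exact ha.add hb
  have hG : HasFDerivAt (fun y => fderiv ℝ (Venergy μ N) y w)
      ((1/4 : ℝ) • (∑ k, (4 * (3 * x k ^ 2 * w k)) • projCLM N k)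
        + (1/2 : ℝ) • (∑ k, ((M.mulVec w k - w k) • projCLM N k
            + w k • ((projCLM N k).comp (Bclm M))))) x := by
    rw [e]
    exact (h1.const_mul (1/4 : ℝ)).add (h2.const_mul (1/2 : ℝ))
  rw [hessQF, hG.fderiv]
  simp [projCLM, Bclm_apply, Finset.mul_sum]
  refine congrArg₂ (· + ·) ?_ ?_ <;>
    exact Finset.sum_congr rfl fun k _ => by ring

def omN (N : ℕ) : ℂ := Complex.exp ((2 * Real.pi / N : ℝ) * Complex.I)

lemma omN_ne_zero : omN N ≠ 0 := Complex.exp_ne_zero _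

lemma omN_pow (j : ℕ) : omN N ^ j = Complex.exp ((j * (2 * Real.pi / N) : ℝ) * Complex.I) := by
  rw [omN, ← Complex.exp_nat_mul]
  push_cast
  ring_nf

lemma omN_pow_N (hN : 0 < N) : omN N ^ N = 1 := by
  rw [omN_pow]
  have : ((N : ℝ) * (2 * Real.pi / N) : ℝ) = 2 * Real.pi := by
    field_simp
  rw [this]
  simpa using Complex.exp_int_mul_two_pi_mul_I 1

lemma omN_pow_mod (hN : 0 < N) (a : ℕ) : omN N ^ a = omN N ^ (a % N) := by
  conv_lhs => rw [← Nat.div_add_mod a N]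
  rw [pow_add, pow_mul, omN_pow_N hN, one_pow, one_mul]

lemma abs_omN_pow (j : ℕ) : ‖omN N ^ j‖ = 1 := by
  rw [omN_pow, Complex.norm_exp_ofReal_mul_I]

lemma normSq_omN_pow (j : ℕ) : Complex.normSq (omN N ^ j) = 1 := by
  rw [Complex.normSq_eq_norm_sq, abs_omN_pow]; norm_num

lemma omN_pow_ne_one (hN : 0 < N) {a : ℕ} (ha : 0 < a) (ha' : a < N) : omN N ^ a ≠ 1 := by
  rw [omN_pow]
  intro h
  rw [Complex.exp_eq_one_iff] at h
  obtain ⟨n, hn⟩ := h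
  have hπ : (Real.pi : ℂ) ≠ 0 := by exact_mod_cast Real.pi_ne_zero
  have hNc : (N : ℂ) ≠ 0 := by exact_mod_cast Nat.cast_ne_zero.mpr hN.ne'
  have hc : (a : ℂ) = n * N := by
    push_cast at hn
    field_simp at hn
    have h2 : (a : ℂ) * (2 * Real.pi * Complex.I) = (n * N) * (2 * Real.pi * Complex.I) := by
      linear_combination (2 * Real.pi * Complex.I) * hn
    exact mul_right_cancel₀
      (mul_ne_zero (mul_ne_zero two_ne_zero hπ) Complex.I_ne_zero) h2
  have hz : (a : ℤ) = n * N := by exact_mod_cast hc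
  have hdvd : N ∣ a := by
    have : (N : ℤ) ∣ (a : ℤ) := ⟨n, by linarith⟩
    exact_mod_cast this
  exact absurd (Nat.le_of_dvd ha hdvd) (not_le.mpr ha')

def Efn (N : ℕ) (j k : Fin N) : ℂ := omN N ^ ((j : ℕ) * (k : ℕ))

lemma conj_omN_pow (m : ℕ) : (starRingEnd ℂ) (omN N ^ m) = (omN N ^ m)⁻¹ :=
  (Complex.inv_eq_conj (abs_omN_pow m)).symm

lemma zeta_pow (a : Fin N) (j : Fin N) :
    omN N ^ ((j : ℕ) * (a : ℕ)) = (omN N ^ (a : ℕ)) ^ (j : ℕ) := by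
  rw [← pow_mul, mul_comm]

lemma orth (hN : 0 < N) (a b : Fin N) :
    ∑ j : Fin N, Efn N j a * (starRingEnd ℂ) (Efn N j b)
      = if a = b then (N : ℂ) else 0 := by
  have hterm : ∀ j : Fin N, Efn N j a * (starRingEnd ℂ) (Efn N j b)
      = (omN N ^ (a : ℕ) * (omN N ^ (b : ℕ))⁻¹) ^ (j : ℕ) := by
    intro j
    rw [Efn, Efn, conj_omN_pow, zeta_pow, zeta_pow, mul_pow, inv_pow]
  simp only [hterm]
  rw [Fin.sum_univ_eq_sum_range (fun i => (omN N ^ (a : ℕ) * (omN N ^ (b : ℕ))⁻¹) ^ i)]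
  by_cases hab : a = b
  · subst hab
    simp [mul_inv_cancel₀ (pow_ne_zero _ (omN_ne_zero (N := N)))]
  · have hζ : omN N ^ (a : ℕ) * (omN N ^ (b : ℕ))⁻¹ ≠ 1 := by
      intro h
      have heq : omN N ^ (a : ℕ) = omN N ^ (b : ℕ) := by
        field_simp at h
        exact (div_eq_one_iff_eq (pow_ne_zero _ (omN_ne_zero (N := N)))).mp h
      rcases lt_trichotomy (a : ℕ) (b : ℕ) with hlt | heq' | hgt
      · have : omN N ^ ((b : ℕ) - (a : ℕ)) = 1 := by
          rw [pow_sub₀ _ (omN_ne_zero (N := N)) hlt.le, heq]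
          exact mul_inv_cancel₀ (pow_ne_zero _ (omN_ne_zero (N := N)))
        exact omN_pow_ne_one hN (by omega) (by omega) this
      · exact hab (Fin.ext heq')
      · have : omN N ^ ((a : ℕ) - (b : ℕ)) = 1 := by
          rw [pow_sub₀ _ (omN_ne_zero (N := N)) hgt.le, heq]
          exact mul_inv_cancel₀ (pow_ne_zero _ (omN_ne_zero (N := N)))
        exact omN_pow_ne_one hN (by omega) (by omega) this
    rw [geom_sum_eq hζ]
    have hN1 : (omN N ^ (a : ℕ) * (omN N ^ (b : ℕ))⁻¹) ^ N = 1 := by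
      rw [mul_pow, inv_pow, ← pow_mul, ← pow_mul, mul_comm (a : ℕ) N, mul_comm (b : ℕ) N,
        pow_mul, pow_mul, omN_pow_N hN, one_pow, one_pow]
      simp
    rw [hN1]
    simp [hab]

def Ffn (N : ℕ) (u : Fin N → ℝ) (j : Fin N) : ℂ := ∑ k, (u k : ℂ) * Efn N j k

lemma parseval (hN : 0 < N) (u : Fin N → ℝ) :
    ∑ j, Complex.normSq (Ffn N u j) = N * ∑ k, u k ^ 2 := by
  have key : (∑ j, (Complex.normSq (Ffn N u j) : ℂ)) = (N : ℂ) * ∑ k, (u k : ℂ) ^ 2 := by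
    have e1 : ∀ j, (Complex.normSq (Ffn N u j) : ℂ)
        = ∑ a, ∑ b, (u a : ℂ) * (u b : ℂ) * (Efn N j a * (starRingEnd ℂ) (Efn N j b)) := by
      intro j
      rw [← Complex.mul_conj, Ffn, map_sum, Finset.sum_mul_sum]
      refine Finset.sum_congr rfl fun a _ => Finset.sum_congr rfl fun b _ => ?_
      rw [_root_.map_mul, Complex.conj_ofReal]
      ring
    simp only [e1]
    rw [Finset.sum_comm]
    have e2 : ∀ a : Fin N, ∑ j : Fin N, ∑ b : Fin N,
        (u a : ℂ) * (u b : ℂ) * (Efn N j a * (starRingEnd ℂ) (Efn N j b))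
        = (N : ℂ) * (u a : ℂ) ^ 2 := by
      intro a
      rw [Finset.sum_comm]
      have e3 : ∀ b : Fin N, ∑ j : Fin N,
          (u a : ℂ) * (u b : ℂ) * (Efn N j a * (starRingEnd ℂ) (Efn N j b))
          = (u a : ℂ) * (u b : ℂ) * (if a = b then (N : ℂ) else 0) := by
        intro b
        rw [← Finset.mul_sum, orth hN a b]
      simp only [e3, mul_ite, mul_zero]
      rw [Finset.sum_ite_eq Finset.univ a (fun b => (u a : ℂ) * (u b : ℂ) * N)]
      simp
      ring
    simp only [e2]
    rw [← Finset.mul_sum]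
  have := key
  push_cast at this
  exact_mod_cast this

lemma normSq_one_sub_exp (t : ℝ) :
    Complex.normSq (1 - Complex.exp ((t : ℂ) * Complex.I)) = 2 - 2 * Real.cos t := by
  rw [Complex.exp_mul_I, Complex.normSq_apply]
  simp [Complex.cos_ofReal_re, Complex.sin_ofReal_re, Complex.cos_ofReal_im,
    Complex.sin_ofReal_im]
  nlinarith [Real.sin_sq_add_cos_sq t]

lemma Efn_succ [NeZero N] (j k : Fin N) :
    Efn N j (k + 1) = Efn N j k * omN N ^ (j : ℕ) := by
  have hN : 0 < N := Nat.pos_of_ne_zero (NeZero.ne N)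
  have hm : ((k + 1 : Fin N) : ℕ) % N = ((k : ℕ) + 1) % N := by
    rw [Fin.val_add]
    conv_lhs => rw [Nat.mod_mod_of_dvd _ dvd_rfl]
    exact Nat.ModEq.add_left (k : ℕ) (Nat.mod_modEq 1 N)
  have hm2 : ((j : ℕ) * ((k + 1 : Fin N) : ℕ)) % N = ((j : ℕ) * ((k : ℕ) + 1)) % N :=
    Nat.ModEq.mul_left (j : ℕ) hm
  rw [Efn, Efn, omN_pow_mod hN, hm2, ← omN_pow_mod hN, Nat.mul_add, mul_one, pow_add]

lemma Ffn_shift [NeZero N] (u : Fin N → ℝ) (j : Fin N) :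
    Ffn N (fun k => u (k + 1) - u k) j = Ffn N u j * ((omN N ^ (j : ℕ))⁻¹ - 1) := by
  have hne : omN N ^ (j : ℕ) ≠ 0 := pow_ne_zero _ (omN_ne_zero (N := N))
  have h1 : ∑ k, ((u (k + 1) : ℂ)) * Efn N j k * omN N ^ (j : ℕ) = Ffn N u j := by
    have hsum := Equiv.sum_comp (Equiv.addRight (1 : Fin N))
      (fun m => ((u m : ℂ)) * Efn N j m)
    calc ∑ k, ((u (k + 1) : ℂ)) * Efn N j k * omN N ^ (j : ℕ)
        = ∑ k, ((u (k + 1) : ℂ)) * Efn N j (k + 1) := by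
          refine Finset.sum_congr rfl fun k _ => ?_
          rw [Efn_succ]; ring
      _ = Ffn N u j := hsum
  have h2 : ∑ k, ((u (k + 1) : ℂ)) * Efn N j k = Ffn N u j * (omN N ^ (j : ℕ))⁻¹ := by
    rw [eq_mul_inv_iff_mul_eq₀ hne, Finset.sum_mul]
    exact h1
  calc Ffn N (fun k => u (k + 1) - u k) j
      = (∑ k, ((u (k + 1) : ℂ)) * Efn N j k) - ∑ k, ((u k : ℂ)) * Efn N j k := by
        rw [Ffn, ← Finset.sum_sub_distrib]
        refine Finset.sum_congr rfl fun k _ => ?_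
        push_cast
        ring
    _ = Ffn N u j * ((omN N ^ (j : ℕ))⁻¹ - 1) := by
        rw [h2, ← Ffn]; ring

lemma normSq_fac (hN : 0 < N) (j : Fin N) :
    Complex.normSq ((omN N ^ (j : ℕ))⁻¹ - 1)
      = 4 * Real.sin (Real.pi * (j : ℕ) / N) ^ 2 := by
  have hne : omN N ^ (j : ℕ) ≠ 0 := pow_ne_zero _ (omN_ne_zero (N := N))
  have e1 : (omN N ^ (j : ℕ))⁻¹ - 1 = (1 - omN N ^ (j : ℕ)) * (omN N ^ (j : ℕ))⁻¹ := by
    field_simp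
  rw [e1, Complex.normSq_mul, Complex.normSq_inv, normSq_omN_pow, inv_one, mul_one,
    omN_pow, normSq_one_sub_exp]
  have : ((j : ℕ) * (2 * Real.pi / N) : ℝ) = 2 * (Real.pi * (j : ℕ) / N) := by ring
  rw [this, Real.sin_sq_eq_half_sub]
  ring

lemma sin_bound (hN : 2 ≤ N) (j : Fin N) (hj : (j : ℕ) ≠ 0) :
    Real.sin (Real.pi / N) ^ 2 ≤ Real.sin (Real.pi * (j : ℕ) / N) ^ 2 := by
  have hNpos : (0 : ℝ) < N := by positivity
  have hj1 : 1 ≤ (j : ℕ) := Nat.one_le_iff_ne_zero.mpr hj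
  have hjN : (j : ℕ) ≤ N - 1 := by omega
  have hjR : (1 : ℝ) ≤ (j : ℕ) := by exact_mod_cast hj1
  have hjR2 : ((j : ℕ) : ℝ) ≤ N - 1 := by
    have : ((j : ℕ) : ℝ) ≤ ((N - 1 : ℕ) : ℝ) := by exact_mod_cast hjN
    rw [Nat.cast_sub (by omega)] at this
    simpa using this
  set a := Real.pi / N with ha
  set x := Real.pi * (j : ℕ) / N with hx
  have hapos : 0 < a := by positivity
  have hN2 : (2 : ℝ) ≤ N := by exact_mod_cast hN
  have hax : a ≤ x := by
    rw [ha, hx]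
    gcongr
    nlinarith [Real.pi_pos]
  have hxpi : x ≤ Real.pi - a := by
    have h5 : x ≤ Real.pi * ((N : ℝ) - 1) / N := by
      rw [hx]
      gcongr
    have h6 : Real.pi * ((N : ℝ) - 1) / N = Real.pi - Real.pi / N := by
      field_simp
    rw [ha]
    linarith
  have ha2 : a ≤ Real.pi / 2 := by
    rw [ha]
    gcongr
  have hsin : Real.sin a ≤ Real.sin x := by
    rcases le_or_gt x (Real.pi / 2) with hxle | hxgt
    · exact Real.sin_le_sin_of_le_of_le_pi_div_two (by linarith) hxle hax
    · have : Real.sin x = Real.sin (Real.pi - x) := (Real.sin_pi_sub x).symm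
      rw [this]
      exact Real.sin_le_sin_of_le_of_le_pi_div_two (by linarith) (by linarith) (by linarith)
  have hsa : 0 ≤ Real.sin a := Real.sin_nonneg_of_nonneg_of_le_pi hapos.le (by linarith)
  nlinarith [hsa, hsin]

lemma wirtinger [NeZero N] (hN : 2 ≤ N) (w : Fin N → ℝ) (hw : ∑ k, w k = 0) :
    4 * Real.sin (Real.pi / N) ^ 2 * ∑ k, w k ^ 2 ≤ ∑ k : Fin N, (w (k + 1) - w k) ^ 2 := by
  have hN0 : 0 < N := by omega
  have hF0 : Ffn N w 0 = 0 := by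
    rw [Ffn]
    have he : ∀ k : Fin N, Efn N 0 k = 1 := by
      intro k
      rw [Efn]
      simp
    simp only [he, mul_one]
    rw [show (∑ k, (w k : ℂ)) = ((∑ k, w k : ℝ) : ℂ) by push_cast; rfl, hw]
    simp
  have hP1 : ∑ j, Complex.normSq (Ffn N w j) * (4 * Real.sin (Real.pi * (j : ℕ) / N) ^ 2)
      = N * ∑ k : Fin N, (w (k + 1) - w k) ^ 2 := by
    rw [← parseval hN0 (fun k => w (k + 1) - w k)]
    refine Finset.sum_congr rfl fun j _ => ?_
    rw [Ffn_shift, Complex.normSq_mul, normSq_fac hN0]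
  have hP2 : ∑ j, Complex.normSq (Ffn N w j) = N * ∑ k, w k ^ 2 := parseval hN0 w
  have hterm : ∀ j : Fin N, 4 * Real.sin (Real.pi / N) ^ 2 * Complex.normSq (Ffn N w j)
      ≤ Complex.normSq (Ffn N w j) * (4 * Real.sin (Real.pi * (j : ℕ) / N) ^ 2) := by
    intro j
    by_cases hj : (j : ℕ) = 0
    · have hj0 : j = 0 := Fin.ext (by simpa using hj)
      rw [hj0, hF0]
      simp
    · have h1 := sin_bound hN j hj
      have h0 := Complex.normSq_nonneg (Ffn N w j)
      nlinarith
  have hsum := Finset.sum_le_sum (fun j (_ : j ∈ Finset.univ) => hterm j)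
  rw [← Finset.mul_sum, hP2, hP1] at hsum
  have hNR : (0 : ℝ) < N := by positivity
  rw [show 4 * Real.sin (Real.pi / N) ^ 2 * ((N : ℝ) * ∑ k, w k ^ 2)
      = (N : ℝ) * (4 * Real.sin (Real.pi / N) ^ 2 * ∑ k, w k ^ 2) from by ring] at hsum
  exact (mul_le_mul_iff_right₀ hNR).mp hsum


lemma val_add_one [NeZero N] (hN : 2 ≤ N) (k : Fin N) :
    ((k + 1 : Fin N) : ℕ) = ((k : ℕ) + 1) % N := by
  rw [Fin.val_add]
  have h1 : ((1 : Fin N) : ℕ) = 1 := by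
    rw [Fin.val_one' N]
    exact Nat.mod_eq_of_lt (by omega)
  rw [h1]

lemma val_add_c [NeZero N] (hN : 2 ≤ N) (k : Fin N) :
    ((k + ⟨N - 1, by omega⟩ : Fin N) : ℕ) = ((k : ℕ) + (N - 1)) % N := by
  rw [Fin.val_add]

lemma one_add_c [NeZero N] (hN : 2 ≤ N) :
    (1 : Fin N) + ⟨N - 1, by omega⟩ = 0 := by
  apply Fin.ext
  rw [Fin.val_add]
  have h1 : ((1 : Fin N) : ℕ) = 1 := by
    rw [Fin.val_one' N]
    exact Nat.mod_eq_of_lt (by omega)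
  rw [h1]
  show (1 + (N - 1)) % N = (0 : Fin N).val
  rw [Fin.val_zero]
  have h2 : 1 + (N - 1) = N := by omega
  rw [h2, Nat.mod_self]

lemma mulVec_Kdisc [NeZero N] (hN : 2 ≤ N) (μ : ℝ) (w : Fin N → ℝ) (k : Fin N) :
    (Kdisc μ N).mulVec w k
      = μ / (4 * Real.sin (Real.pi / N) ^ 2)
        * (2 * w k - w (k + 1) - w (k + ⟨N - 1, by omega⟩)) := by
  classical
  set c0 := μ / (4 * Real.sin (Real.pi / N) ^ 2)
  have hterm : ∀ l : Fin N, Kdisc μ N k l * w l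
      = c0 * (2 * (if l = k then w l else 0) - (if l = k + 1 then w l else 0)
          - (if l = k + ⟨N - 1, by omega⟩ then w l else 0)) := by
    intro l
    have h1 : ((l : ℕ) = ((k : ℕ) + 1) % N) ↔ l = k + 1 := by
      rw [Fin.ext_iff, val_add_one hN]
    have h2 : ((l : ℕ) = ((k : ℕ) + (N - 1)) % N) ↔ l = k + ⟨N - 1, by omega⟩ := by
      rw [Fin.ext_iff, val_add_c hN]
    rw [Kdisc]
    simp only [Matrix.of_apply, h1, h2]
    split_ifs <;> ring
  rw [Matrix.mulVec, dotProduct]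
  simp only [hterm]
  rw [← Finset.mul_sum]
  congr 1
  rw [Finset.sum_sub_distrib, Finset.sum_sub_distrib, ← Finset.mul_sum]
  rw [Finset.sum_ite_eq' Finset.univ k w, Finset.sum_ite_eq' Finset.univ (k + 1) w,
    Finset.sum_ite_eq' Finset.univ (k + ⟨N - 1, by omega⟩) w]
  simp

lemma quadform_Kdisc [NeZero N] (hN : 2 ≤ N) (μ : ℝ) (w : Fin N → ℝ) :
    ∑ k, w k * (Kdisc μ N).mulVec w k
      = μ / (4 * Real.sin (Real.pi / N) ^ 2) * ∑ k : Fin N, (w (k + 1) - w k) ^ 2 := by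
  classical
  set c0 := μ / (4 * Real.sin (Real.pi / N) ^ 2)
  set c : Fin N := ⟨N - 1, by omega⟩ with hc
  have e1 : ∑ k, w k * (Kdisc μ N).mulVec w k
      = c0 * ∑ k : Fin N, (2 * w k ^ 2 - w k * w (k + 1) - w k * w (k + c)) := by
    rw [Finset.mul_sum]
    refine Finset.sum_congr rfl fun k _ => ?_
    rw [mulVec_Kdisc hN]
    ring
  have hkc : ∀ k : Fin N, (k + 1) + c = k := by
    intro k
    rw [add_assoc, one_add_c hN, add_zero]
  have e2 : ∑ k : Fin N, w k * w (k + c) = ∑ k : Fin N, w (k + 1) * w k := by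
    rw [← Equiv.sum_comp (Equiv.addRight (1 : Fin N)) (fun m => w m * w (m + c))]
    refine Finset.sum_congr rfl fun k _ => ?_
    simp only [Equiv.coe_addRight]
    rw [hkc k]
  have e3 : ∑ k : Fin N, w (k + 1) ^ 2 = ∑ k : Fin N, w k ^ 2 := by
    exact Equiv.sum_comp (Equiv.addRight (1 : Fin N)) (fun m => w m ^ 2)
  have e4 : ∑ k : Fin N, (w (k + 1) - w k) ^ 2
      = ∑ k : Fin N, w (k + 1) ^ 2 - 2 * ∑ k : Fin N, (w (k + 1) * w k)
        + ∑ k : Fin N, w k ^ 2 := by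
    rw [Finset.mul_sum, ← Finset.sum_sub_distrib, ← Finset.sum_add_distrib]
    refine Finset.sum_congr rfl fun k _ => ?_
    ring
  have e5 : ∑ k : Fin N, (2 * w k ^ 2 - w k * w (k + 1) - w k * w (k + c))
      = 2 * ∑ k : Fin N, w k ^ 2 - ∑ k : Fin N, w k * w (k + 1)
        - ∑ k : Fin N, w k * w (k + c) := by
    rw [Finset.mul_sum, ← Finset.sum_sub_distrib, ← Finset.sum_sub_distrib]
  have e6 : ∑ k : Fin N, w k * w (k + 1) = ∑ k : Fin N, w (k + 1) * w k :=
    Finset.sum_congr rfl fun k _ => mul_comm _ _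
  rw [e1, e5, e2, e6, e4, e3]
  ring

end HessAux
end

/-- uniform convexity of `Hess V` in the directions orthogonal to
the constant vectors: `⟨w, Hess V(x) w⟩ ≥ (μ−1)‖w‖²` whenever `Σ_k w_k = 0`. -/
theorem hessV_convex_orthogonal (μ : ℝ) (hμ : 1 < μ) (N : ℕ) (hN : 2 ≤ N)
    (x w : Fin N → ℝ) (hw : ∑ k, w k = 0) :
    (μ - 1) * ∑ k, w k ^ 2 ≤ hessQF N (Venergy μ N) x w := by
  haveI : NeZero N := ⟨by omega⟩
  have hq := HessAux.hessQF_V μ N x w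
  have hsplit : ∑ k, w k * ((Kdisc μ N).mulVec w k - w k)
      = ∑ k, w k * (Kdisc μ N).mulVec w k - ∑ k, w k ^ 2 := by
    rw [← Finset.sum_sub_distrib]
    exact Finset.sum_congr rfl fun k _ => by ring
  have hquad := HessAux.quadform_Kdisc hN μ w
  have hwir := HessAux.wirtinger hN w hw
  have hspos : 0 < Real.sin (Real.pi / N) := by
    apply Real.sin_pos_of_pos_of_lt_pi
    · positivity
    · have h2 : (2 : ℝ) ≤ N := by exact_mod_cast hN
      have := Real.pi_pos
      rw [div_lt_iff₀ (by positivity : (0:ℝ) < N)]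
      nlinarith
  have hs2 : (0 : ℝ) < 4 * Real.sin (Real.pi / N) ^ 2 := by positivity
  have hc0 : μ / (4 * Real.sin (Real.pi / N) ^ 2) * (4 * Real.sin (Real.pi / N) ^ 2) = μ :=
    div_mul_cancel₀ μ hs2.ne'
  have hc0pos : 0 ≤ μ / (4 * Real.sin (Real.pi / N) ^ 2) := by positivity
  have hA : μ * ∑ k, w k ^ 2 ≤ ∑ k, w k * (Kdisc μ N).mulVec w k := by
    rw [hquad]
    calc μ * ∑ k, w k ^ 2
        = μ / (4 * Real.sin (Real.pi / N) ^ 2)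
            * (4 * Real.sin (Real.pi / N) ^ 2 * ∑ k, w k ^ 2) := by
          rw [← mul_assoc, hc0]
      _ ≤ μ / (4 * Real.sin (Real.pi / N) ^ 2) * ∑ k : Fin N, (w (k + 1) - w k) ^ 2 :=
          mul_le_mul_of_nonneg_left hwir hc0pos
  have hpos : 0 ≤ 3 * ∑ k, x k ^ 2 * w k ^ 2 := by positivity
  rw [hq, hsplit]
  nlinarith [hA, hpos]
end

section
/- As N → ∞, the ratio (det(K_N + 2I)/|det(K_N − I)|)^{1/2} converges to sinh(π√(2/μ)) / sin(π√(1/μ)). Equivalently, since det(K_N + 2I) = det Hess V(I₊) = det Hess V(I₋) and det(K_N − I) = det Hess V(O), one has (det Hess V(I₊)/|det Hess V(O)|)^{1/2} → sinh(π√(2/μ))/sin(π√(1/μ)). -/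
open Real MeasureTheory Matrix Filter

noncomputable section DetAux
open Topology Polynomial
namespace DetAux

lemma pow_mod_eq {u : ℂ} {N : ℕ} (h : u ^ N = 1) (m : ℕ) : u ^ (m % N) = u ^ m := by
  conv_rhs => rw [← Nat.div_add_mod m N]
  rw [pow_add, pow_mul, h, one_pow, one_mul]

lemma pow_val_add {N : ℕ} [NeZero N] {u : ℂ} (h : u ^ N = 1) (a b : Fin N) :
    u ^ ((a + b : Fin N) : ℕ) = u ^ (a : ℕ) * u ^ (b : ℕ) := by
  rw [Fin.val_add, pow_mod_eq h, pow_add]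

lemma pow_val_neg {N : ℕ} [NeZero N] {u : ℂ} (h : u ^ N = 1) (a : Fin N) :
    u ^ ((-a : Fin N) : ℕ) = (u ^ (a : ℕ))⁻¹ := by
  apply eq_inv_of_mul_eq_one_left
  rw [← pow_val_add h, neg_add_cancel, Fin.val_zero, pow_zero]

lemma prod_x_sub_pow {N : ℕ} (hN : 0 < N) {ζ : ℂ} (hζ : IsPrimitiveRoot ζ N) (x : ℂ) :
    ∏ k : Fin N, (x - ζ ^ (k : ℕ)) = x ^ N - 1 := by
  have h1 : Polynomial.nthRootsFinset N (1 : ℂ) = Finset.image (fun k : ℕ => ζ ^ k) (Finset.range N) := by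
    symm
    apply Finset.eq_of_subset_of_card_le
    · intro z hz
      simp only [Finset.mem_image, Finset.mem_range] at hz
      obtain ⟨k, hk, rfl⟩ := hz
      exact (Polynomial.mem_nthRootsFinset hN (1 : ℂ)).2
        (by rw [← pow_mul, mul_comm, pow_mul, hζ.pow_eq_one, one_pow])
    · rw [hζ.card_nthRootsFinset, Finset.card_image_of_injOn, Finset.card_range]
      intro i hi j hj hij
      exact hζ.pow_inj (Finset.mem_range.1 hi) (Finset.mem_range.1 hj) hij
  have he := congrArg (Polynomial.eval x) (Polynomial.X_pow_sub_one_eq_prod hN hζ)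
  simp only [eval_sub, eval_pow, eval_X, eval_one, eval_prod, eval_C] at he
  rw [he, h1, Finset.prod_image, ← Fin.prod_univ_eq_prod_range fun k => x - ζ ^ k]
  intro i hi j hj hij
  exact hζ.pow_inj (Finset.mem_range.1 hi) (Finset.mem_range.1 hj) (by simpa using hij)


lemma det_circ {N : ℕ} [NeZero N] {ζ : ℂ} (hζ : IsPrimitiveRoot ζ N)
    (v : Fin N → ℂ) (M : Matrix (Fin N) (Fin N) ℂ) (hM : ∀ k l, M k l = v (k - l)) :
    M.det = ∏ k : Fin N, ∑ m : Fin N, v m * (ζ ^ (k : ℕ)) ^ ((-m : Fin N) : ℕ) := by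
  have hζ1 : ζ ^ N = 1 := hζ.pow_eq_one
  set lam : Fin N → ℂ := fun k => ∑ m : Fin N, v m * (ζ ^ (k : ℕ)) ^ ((-m : Fin N) : ℕ) with hlam
  set F : Matrix (Fin N) (Fin N) ℂ := Matrix.vandermonde (fun i : Fin N => ζ ^ (i : ℕ)) with hF
  have hFdet : F.det ≠ 0 := by
    rw [hF, Matrix.det_vandermonde_ne_zero_iff]
    intro i j hij
    exact Fin.ext (hζ.pow_inj i.isLt j.isLt hij)
  have key : M * F = F * Matrix.diagonal lam := by
    ext i k
    rw [Matrix.mul_apply, Matrix.mul_diagonal]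
    have hw1 : (ζ ^ (k : ℕ)) ^ N = 1 := by rw [← pow_mul, mul_comm, pow_mul, hζ1, one_pow]
    calc ∑ j, M i j * F j k
        = ∑ m : Fin N, M i (i - m) * F (i - m) k := by
          exact (Fintype.sum_equiv (Equiv.subLeft i) _ _ (fun m => rfl)).symm
      _ = ∑ m : Fin N, (ζ ^ (k : ℕ)) ^ (i : ℕ) * (v m * (ζ ^ (k : ℕ)) ^ ((-m : Fin N) : ℕ)) := by
          apply Finset.sum_congr rfl
          intro m _
          rw [hM, sub_sub_cancel, hF]
          show v m * (ζ ^ ((i - m : Fin N) : ℕ)) ^ (k : ℕ) = _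
          rw [← pow_mul, mul_comm ((i - m : Fin N) : ℕ), pow_mul]
          rw [sub_eq_add_neg i m, pow_val_add hw1]
          ring
      _ = F i k * lam k := by
          rw [← Finset.mul_sum, hlam, hF]
          show _ = (ζ ^ (i : ℕ)) ^ (k : ℕ) * _
          rw [← pow_mul, ← pow_mul, mul_comm (i : ℕ)]
  have := congrArg Matrix.det key
  rw [Matrix.det_mul, Matrix.det_mul, Matrix.det_diagonal, mul_comm M.det] at this
  exact mul_left_cancel₀ hFdet this


lemma fin_cond0 {N : ℕ} [NeZero N] (k l : Fin N) : (l = k) ↔ (k - l = 0) := by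
  rw [sub_eq_zero]; exact eq_comm

lemma fin_cond0' {N : ℕ} [NeZero N] (k l : Fin N) : (k = l) ↔ (k - l = 0) := by
  rw [sub_eq_zero]

lemma fin_cond1 {N : ℕ} [NeZero N] (hN : 2 ≤ N) (k l : Fin N) :
    ((l : ℕ) = ((k : ℕ) + 1) % N) ↔ (k - l = -1) := by
  have h1 : ((k + 1 : Fin N) : ℕ) = ((k : ℕ) + 1) % N := by
    rw [Fin.val_add, Fin.val_one', Nat.mod_eq_of_lt (show 1 < N by omega)]
  constructor
  · intro h
    have hl : l = k + 1 := Fin.ext (by rw [h, h1])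
    rw [hl, sub_add_eq_sub_sub, sub_self, zero_sub]
  · intro h
    have hl : l = k + 1 := by
      rw [← sub_sub_cancel k l, h, sub_neg_eq_add]
    rw [hl, h1]

lemma fin_cond2 {N : ℕ} [NeZero N] (hN : 2 ≤ N) (k l : Fin N) :
    ((l : ℕ) = ((k : ℕ) + (N - 1)) % N) ↔ (k - l = 1) := by
  have h1 : ((k - 1 : Fin N) : ℕ) = ((k : ℕ) + (N - 1)) % N := by
    rw [Fin.sub_def]
    simp only [Fin.val_one', Nat.mod_eq_of_lt (show 1 < N by omega)]
    rw [Nat.add_comm]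
  constructor
  · intro h
    have hl : l = k - 1 := Fin.ext (by rw [h, h1])
    rw [hl, sub_sub_cancel]
  · intro h
    have hl : l = k - 1 := by rw [← sub_sub_cancel k l, h]
    rw [hl, h1]

lemma lam_eval {N : ℕ} (hN : 2 ≤ N) (a c x w : ℂ) (hw : w ^ N = 1) (hx : x ≠ 0)
    (hax : c * (x + x⁻¹) = a + 2 * c) :
    haveI : NeZero N := ⟨by omega⟩
    ∑ m : Fin N,
        (c * ((if m = 0 then 2 else 0) - (if m = (-1 : Fin N) then 1 else 0)
            - (if m = 1 then 1 else 0)) + (if m = 0 then a else 0)) * w ^ ((-m : Fin N) : ℕ)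
      = c * x⁻¹ * ((x - w) * (x - w⁻¹)) := by
  haveI : NeZero N := ⟨by omega⟩
  have hw0 : w ≠ 0 := by
    rintro rfl
    rw [zero_pow (by omega : N ≠ 0)] at hw
    exact zero_ne_one hw
  have hsplit : ∀ m : Fin N,
      (c * ((if m = 0 then 2 else 0) - (if m = (-1 : Fin N) then 1 else 0)
          - (if m = 1 then 1 else 0)) + (if m = 0 then a else 0)) * w ^ ((-m : Fin N) : ℕ)
      = (if m = 0 then (a + 2 * c) * w ^ ((-m : Fin N) : ℕ) else 0)
        - (if m = (-1 : Fin N) then c * w ^ ((-m : Fin N) : ℕ) else 0)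
        - (if m = 1 then c * w ^ ((-m : Fin N) : ℕ) else 0) := by
    intro m; split_ifs <;> ring
  rw [Finset.sum_congr rfl (fun m _ => hsplit m)]
  rw [Finset.sum_sub_distrib, Finset.sum_sub_distrib,
    Finset.sum_ite_eq' Finset.univ (0 : Fin N),
    Finset.sum_ite_eq' Finset.univ (-1 : Fin N),
    Finset.sum_ite_eq' Finset.univ (1 : Fin N)]
  simp only [Finset.mem_univ, if_true, neg_zero, Fin.val_zero, pow_zero, neg_neg, mul_one]
  have hv1 : w ^ ((1 : Fin N) : ℕ) = w := by
    rw [Fin.val_one', Nat.mod_eq_of_lt (show 1 < N by omega), pow_one]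
  rw [pow_val_neg hw 1, hv1]
  have hax' : c * x ^ 2 + c = a * x + 2 * c * x := by
    field_simp at hax
    linear_combination hax
  field_simp
  linear_combination (-w) * hax'


lemma det_master (μ : ℝ) {N : ℕ} (hN : 2 ≤ N) (a : ℝ) (x : ℂ) (hx : x ≠ 0)
    (hax : ((μ / (4 * Real.sin (Real.pi / N) ^ 2) : ℝ) : ℂ) * (x + x⁻¹)
      = (a : ℂ) + 2 * ((μ / (4 * Real.sin (Real.pi / N) ^ 2) : ℝ) : ℂ)) :
    (((Kdisc μ N + a • 1).det : ℝ) : ℂ)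
      = ((μ / (4 * Real.sin (Real.pi / N) ^ 2) : ℝ) : ℂ) ^ N * (x⁻¹) ^ N * (x ^ N - 1) ^ 2 := by
  haveI : NeZero N := NeZero.of_pos (by omega)
  set c : ℂ := ((μ / (4 * Real.sin (Real.pi / N) ^ 2) : ℝ) : ℂ) with hc
  set ζ : ℂ := Complex.exp (2 * Real.pi * Complex.I / N) with hzeta
  have hζ : IsPrimitiveRoot ζ N := Complex.isPrimitiveRoot_exp N (by omega)
  have hζ1 : ζ ^ N = 1 := hζ.pow_eq_one
  set v : Fin N → ℂ := fun m =>
    c * ((if m = 0 then 2 else 0) - (if m = (-1 : Fin N) then 1 else 0)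
      - (if m = 1 then 1 else 0)) + (if m = 0 then (a : ℂ) else 0) with hv
  have hdet : (((Kdisc μ N + a • 1).det : ℝ) : ℂ)
      = ((Kdisc μ N + a • 1).map Complex.ofRealHom).det :=
    Complex.ofRealHom.map_det _
  have hM : ∀ k l, ((Kdisc μ N + a • 1).map Complex.ofRealHom) k l = v (k - l) := by
    intro k l
    simp only [Matrix.map_apply, Matrix.add_apply, Kdisc, Matrix.of_apply, Matrix.smul_apply,
      Matrix.one_apply, smul_eq_mul, hv]
    simp only [fin_cond0 k l, fin_cond0' k l, fin_cond1 hN k l, fin_cond2 hN k l]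
    simp only [Complex.ofRealHom_eq_coe, Complex.ofReal_add, Complex.ofReal_mul,
      Complex.ofReal_sub, apply_ite Complex.ofReal, Complex.ofReal_zero, Complex.ofReal_one,
      Complex.ofReal_ofNat]
    rw [← hc]
    split_ifs <;> ring
  rw [hdet, det_circ hζ v _ hM]
  have heval : ∀ k : Fin N,
      (∑ m : Fin N, v m * (ζ ^ (k : ℕ)) ^ ((-m : Fin N) : ℕ))
        = c * x⁻¹ * ((x - ζ ^ (k : ℕ)) * (x - (ζ ^ (k : ℕ))⁻¹)) := by
    intro k
    have hw : (ζ ^ (k : ℕ)) ^ N = 1 := by rw [← pow_mul, mul_comm, pow_mul, hζ1, one_pow]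
    exact lam_eval hN (a : ℂ) c x (ζ ^ (k : ℕ)) hw hx hax
  rw [Finset.prod_congr rfl (fun k _ => heval k)]
  simp only [Finset.prod_mul_distrib, Finset.prod_const, Finset.card_univ, Fintype.card_fin]
  have hB : ∏ k : Fin N, (x - (ζ ^ (k : ℕ))⁻¹) = x ^ N - 1 := by
    have h1 : ∀ k : Fin N, x - (ζ ^ (k : ℕ))⁻¹ = x - ζ ^ ((-k : Fin N) : ℕ) := by
      intro k; rw [pow_val_neg hζ1 k]
    rw [Finset.prod_congr rfl (fun k _ => h1 k)]
    have heq := Fintype.prod_equiv (Equiv.neg (Fin N)) (fun j : Fin N => x - ζ ^ (j : ℕ))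
      (fun i : Fin N => x - ζ ^ ((-i : Fin N) : ℕ)) (fun i => by simp)
    rw [← heq]
    exact prod_x_sub_pow (by omega) hζ x
  rw [prod_x_sub_pow (by omega) hζ x, hB]
  ring


lemma sin_div_pos {N : ℕ} (hN : 2 ≤ N) : 0 < Real.sin (Real.pi / N) := by
  apply Real.sin_pos_of_pos_of_lt_pi
  · positivity
  · apply div_lt_self Real.pi_pos
    exact_mod_cast (by omega : 1 < N)

lemma detK_plus2 (μ : ℝ) (hμ : 1 < μ) {N : ℕ} (hN : 2 ≤ N) :
    (Kdisc μ N + 2).det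
      = (μ / (4 * Real.sin (Real.pi / N) ^ 2)) ^ N * 4
        * Real.sinh ((N : ℝ) * Real.arsinh (Real.sqrt (2 / μ) * Real.sin (Real.pi / N))) ^ 2 := by
  have hμ0 : (0 : ℝ) < μ := lt_trans one_pos hμ
  have hsin := sin_div_pos hN
  set t := Real.arsinh (Real.sqrt (2 / μ) * Real.sin (Real.pi / N)) with ht
  have hr : (μ / (4 * Real.sin (Real.pi / N) ^ 2)) * (Real.exp (2 * t) + (Real.exp (2 * t))⁻¹)
      = 2 + 2 * (μ / (4 * Real.sin (Real.pi / N) ^ 2)) := by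
    rw [← Real.exp_neg]
    have hcosh : Real.exp (2 * t) + Real.exp (-(2 * t)) = 2 * Real.cosh (2 * t) := by
      rw [Real.cosh_eq]; ring
    rw [hcosh, Real.cosh_two_mul, Real.cosh_sq, Real.sinh_arsinh, mul_pow,
      Real.sq_sqrt (by positivity : (0:ℝ) ≤ 2 / μ)]
    field_simp
    ring
  have hax : ((μ / (4 * Real.sin (Real.pi / N) ^ 2) : ℝ) : ℂ)
        * ((Real.exp (2 * t) : ℂ) + (Real.exp (2 * t) : ℂ)⁻¹)
      = ((2 : ℝ) : ℂ) + 2 * ((μ / (4 * Real.sin (Real.pi / N) ^ 2) : ℝ) : ℂ) := by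
    exact_mod_cast congrArg (Complex.ofReal) hr
  have hdet := det_master μ hN 2 ((Real.exp (2 * t) : ℝ) : ℂ)
    (Complex.ofReal_ne_zero.mpr (Real.exp_ne_zero _)) hax
  have hmat : Kdisc μ N + 2 = Kdisc μ N + (2 : ℝ) • (1 : Matrix (Fin N) (Fin N) ℝ) := by
    rw [two_smul, one_add_one_eq_two]
  rw [hmat]
  apply Complex.ofReal_inj.mp
  rw [hdet]
  have hrr : ((Real.exp (2 * t))⁻¹) ^ N * ((Real.exp (2 * t)) ^ N - 1) ^ 2
      = 4 * Real.sinh ((N : ℝ) * t) ^ 2 := by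
    have hE : Real.exp ((N : ℝ) * t) ≠ 0 := Real.exp_ne_zero _
    have h1 : (Real.exp (2 * t)) ^ N = Real.exp ((N : ℝ) * t) ^ 2 := by
      rw [← Real.exp_nat_mul, show (N : ℝ) * (2 * t) = (N : ℝ) * t + (N : ℝ) * t by ring, Real.exp_add, sq]
    rw [inv_pow, h1, Real.sinh_eq, Real.exp_neg]
    field_simp
    ring
  calc ((μ / (4 * Real.sin (Real.pi / N) ^ 2) : ℝ) : ℂ) ^ N
        * ((Real.exp (2 * t) : ℂ)⁻¹) ^ N * (((Real.exp (2 * t) : ℂ)) ^ N - 1) ^ 2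
      = ((((μ / (4 * Real.sin (Real.pi / N) ^ 2)) ^ N
          * (((Real.exp (2 * t))⁻¹) ^ N * ((Real.exp (2 * t)) ^ N - 1) ^ 2)) : ℝ) : ℂ) := by
        push_cast; ring
    _ = _ := by rw [hrr]; push_cast; ring

lemma detK_minus1 (μ : ℝ) (hμ : 1 < μ) {N : ℕ} (hN : 2 ≤ N) :
    (Kdisc μ N - 1).det
      = -((μ / (4 * Real.sin (Real.pi / N) ^ 2)) ^ N * 4
        * Real.sin ((N : ℝ) * Real.arcsin (Real.sqrt (1 / μ) * Real.sin (Real.pi / N))) ^ 2) := by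
  have hμ0 : (0 : ℝ) < μ := lt_trans one_pos hμ
  have hsin := sin_div_pos hN
  set s := Real.arcsin (Real.sqrt (1 / μ) * Real.sin (Real.pi / N)) with hs
  set x : ℂ := Complex.exp ((2 * s : ℝ) * Complex.I) with hxdef
  have hx : x ≠ 0 := Complex.exp_ne_zero _
  have hsins : Real.sin s = Real.sqrt (1 / μ) * Real.sin (Real.pi / N) := by
    apply Real.sin_arcsin
    · have h1 : (0:ℝ) ≤ Real.sqrt (1 / μ) * Real.sin (Real.pi / N) := by positivity
      linarith
    · have h2 : Real.sqrt (1 / μ) ≤ 1 := by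
        rw [show (Real.sqrt (1/μ) ≤ 1) ↔ (1/μ ≤ 1) from Real.sqrt_le_one, div_le_one hμ0]
        linarith
      have h3 : Real.sin (Real.pi / N) ≤ 1 := Real.sin_le_one _
      calc Real.sqrt (1 / μ) * Real.sin (Real.pi / N) ≤ 1 * 1 := by
            apply mul_le_mul h2 h3 (le_of_lt hsin) zero_le_one
        _ = 1 := by norm_num
  have hax : ((μ / (4 * Real.sin (Real.pi / N) ^ 2) : ℝ) : ℂ) * (x + x⁻¹)
      = ((-1 : ℝ) : ℂ) + 2 * ((μ / (4 * Real.sin (Real.pi / N) ^ 2) : ℝ) : ℂ) := by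
    have hxinv : x⁻¹ = Complex.exp (-((2 * s : ℝ) * Complex.I)) := by
      rw [hxdef, ← Complex.exp_neg]
    have hcos : x + x⁻¹ = 2 * Complex.cos ((2 * s : ℝ) : ℂ) := by
      rw [hxdef, hxinv, Complex.two_cos, neg_mul]
    rw [hcos, ← Complex.ofReal_cos]
    have h4 : Real.sin s ^ 2 = (1 / μ) * Real.sin (Real.pi / N) ^ 2 := by
      rw [hsins, mul_pow, Real.sq_sqrt (by positivity : (0:ℝ) ≤ 1 / μ)]
    have hrc : Real.cos (2 * s) = 1 - 2 * ((1 / μ) * Real.sin (Real.pi / N) ^ 2) := by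
      rw [Real.cos_two_mul']
      linarith [Real.sin_sq_add_cos_sq s, h4]
    have hr : (μ / (4 * Real.sin (Real.pi / N) ^ 2)) * (2 * Real.cos (2 * s))
        = (-1) + 2 * (μ / (4 * Real.sin (Real.pi / N) ^ 2)) := by
      rw [hrc]; field_simp; ring
    exact_mod_cast congrArg (Complex.ofReal) hr
  have hdet := det_master μ hN (-1) x hx hax
  have hmat : Kdisc μ N - 1 = Kdisc μ N + (-1 : ℝ) • (1 : Matrix (Fin N) (Fin N) ℝ) := by
    rw [neg_smul, one_smul, ← sub_eq_add_neg]
  rw [hmat]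
  apply Complex.ofReal_inj.mp
  rw [hdet]
  set y := (N : ℝ) * s with hy
  have hxN : x ^ N = Complex.exp ((y : ℝ) * Complex.I) ^ 2 := by
    have harg : ((N : ℕ) : ℂ) * (((2 * s : ℝ) : ℂ) * Complex.I)
        = ((y : ℝ) : ℂ) * Complex.I + ((y : ℝ) : ℂ) * Complex.I := by
      rw [hy]; push_cast; ring
    rw [hxdef, ← Complex.exp_nat_mul, harg, Complex.exp_add, sq]
  have hE : Complex.exp ((y : ℝ) * Complex.I) ≠ 0 := Complex.exp_ne_zero _
  have hEinv : (Complex.exp ((y : ℝ) * Complex.I))⁻¹ = Complex.exp (-((y : ℝ) * Complex.I)) := by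
    rw [← Complex.exp_neg]
  have h2sin : Complex.exp ((y : ℝ) * Complex.I) - Complex.exp (-((y : ℝ) * Complex.I))
      = 2 * Complex.I * Complex.sin ((y : ℝ) : ℂ) := by
    have h2s := Complex.two_sin ((y : ℝ) : ℂ)
    rw [neg_mul] at h2s
    have hI : Complex.I * Complex.I = -1 := Complex.I_mul_I
    linear_combination (-Complex.I) * h2s
      + (Complex.exp (((y:ℝ):ℂ) * Complex.I) - Complex.exp (-(((y:ℝ):ℂ) * Complex.I))) * hI
  have key : (x⁻¹) ^ N * (x ^ N - 1) ^ 2 = ((-(4 * Real.sin y ^ 2) : ℝ) : ℂ) := by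
    rw [inv_pow, hxN]
    have expand : ((Complex.exp ((y : ℝ) * Complex.I) ^ 2)⁻¹) * ((Complex.exp ((y : ℝ) * Complex.I) ^ 2 - 1) ^ 2)
        = (Complex.exp ((y : ℝ) * Complex.I) - (Complex.exp ((y : ℝ) * Complex.I))⁻¹) ^ 2 := by
      field_simp
    rw [expand, hEinv, h2sin]
    have hI : Complex.I * Complex.I = -1 := Complex.I_mul_I
    push_cast
    linear_combination (4 * Complex.sin ((y:ℝ):ℂ) ^ 2) * hI
  calc ((μ / (4 * Real.sin (Real.pi / N) ^ 2) : ℝ) : ℂ) ^ N * (x⁻¹) ^ N * (x ^ N - 1) ^ 2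
      = ((μ / (4 * Real.sin (Real.pi / N) ^ 2) : ℝ) : ℂ) ^ N * ((x⁻¹) ^ N * (x ^ N - 1) ^ 2) := by ring
    _ = _ := by rw [key]; push_cast; ring


lemma tendsto_pi_div : Tendsto (fun N : ℕ => Real.pi / N) atTop (nhds 0) :=
  tendsto_const_div_atTop_nhds_zero_nat _

lemma tendsto_sin_pi_div : Tendsto (fun N : ℕ => Real.sin (Real.pi / N)) atTop (nhds 0) := by
  have := (Real.continuous_sin.tendsto 0).comp tendsto_pi_div
  simpa [Function.comp_def] using this

lemma tendsto_N_sin : Tendsto (fun N : ℕ => (N : ℝ) * Real.sin (Real.pi / N)) atTop (nhds Real.pi) := by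
  have hd : HasDerivAt Real.sin 1 0 := by
    simpa using Real.hasDerivAt_sin 0
  have hslope := hasDerivAt_iff_tendsto_slope.mp hd
  have harg : Tendsto (fun N : ℕ => Real.pi / N) atTop (𝓝[≠] (0:ℝ)) := by
    apply tendsto_nhdsWithin_iff.mpr
    refine ⟨tendsto_pi_div, ?_⟩
    filter_upwards [eventually_ge_atTop 1] with N hN
    have : (0:ℝ) < Real.pi / N := by
      apply div_pos Real.pi_pos
      exact_mod_cast (by omega : 0 < N)
    exact ne_of_gt this
  have hcomp : Tendsto (fun N : ℕ => slope Real.sin 0 (Real.pi / N)) atTop (nhds 1) :=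
    hslope.comp harg
  have heq : ∀ᶠ N : ℕ in atTop,
      Real.pi * slope Real.sin 0 (Real.pi / N) = (N : ℝ) * Real.sin (Real.pi / N) := by
    filter_upwards [eventually_ge_atTop 1] with N hN
    have hN0 : ((N : ℝ)) ≠ 0 := by exact_mod_cast (by omega : N ≠ 0)
    rw [slope_def_field, Real.sin_zero]
    field_simp
    ring
  have : Tendsto (fun N : ℕ => Real.pi * slope Real.sin 0 (Real.pi / N)) atTop (nhds (Real.pi * 1)) :=
    tendsto_const_nhds.mul hcomp
  rw [mul_one] at this
  exact this.congr' heq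

lemma tendsto_mul_slope (g : ℝ → ℝ) (hg : HasDerivAt g 1 0) (hg0 : g 0 = 0) (b : ℝ) (hb : 0 < b) :
    Tendsto (fun N : ℕ => (N : ℝ) * g (b * Real.sin (Real.pi / N))) atTop
      (nhds (Real.pi * b)) := by
  have hsinpos : ∀ᶠ N : ℕ in atTop, 0 < Real.sin (Real.pi / N) := by
    filter_upwards [eventually_ge_atTop 2] with N hN
    apply Real.sin_pos_of_pos_of_lt_pi
    · apply div_pos Real.pi_pos; exact_mod_cast (by omega : 0 < N)
    · apply div_lt_self Real.pi_pos; exact_mod_cast (by omega : 1 < N)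
  have hu : Tendsto (fun N : ℕ => b * Real.sin (Real.pi / N)) atTop (nhds 0) := by
    have := (tendsto_const_nhds (x := b) (f := (atTop : Filter ℕ))).mul tendsto_sin_pi_div
    simpa using this
  have harg : Tendsto (fun N : ℕ => b * Real.sin (Real.pi / N)) atTop (𝓝[≠] (0:ℝ)) := by
    apply tendsto_nhdsWithin_iff.mpr
    refine ⟨hu, ?_⟩
    filter_upwards [hsinpos] with N hN
    have : 0 < b * Real.sin (Real.pi / N) := mul_pos hb hN
    exact ne_of_gt this
  have hslope := hasDerivAt_iff_tendsto_slope.mp hg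
  have hcomp : Tendsto (fun N : ℕ => slope g 0 (b * Real.sin (Real.pi / N))) atTop (nhds 1) :=
    hslope.comp harg
  have hmain : Tendsto (fun N : ℕ =>
      slope g 0 (b * Real.sin (Real.pi / N)) * (b * ((N : ℝ) * Real.sin (Real.pi / N))))
      atTop (nhds (1 * (b * Real.pi))) :=
    hcomp.mul (tendsto_const_nhds.mul tendsto_N_sin)
  have heq : ∀ᶠ N : ℕ in atTop,
      slope g 0 (b * Real.sin (Real.pi / N)) * (b * ((N : ℝ) * Real.sin (Real.pi / N)))
        = (N : ℝ) * g (b * Real.sin (Real.pi / N)) := by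
    filter_upwards [hsinpos] with N hN
    have hu0 : b * Real.sin (Real.pi / N) ≠ 0 := ne_of_gt (mul_pos hb hN)
    rw [slope_def_field, hg0]
    field_simp
    ring
  have := hmain.congr' heq
  simpa [mul_comm] using this


end DetAux
end DetAux

/-- convergence of the ratio of determinants:
`(det(K_N + 2I)/|det(K_N − I)|)^{1/2} → sinh(π√(2/μ))/sin(π√(1/μ))` as `N → ∞`. -/
theorem det_ratio_tendsto (μ : ℝ) (hμ : 1 < μ) :
    Filter.Tendsto
      (fun N : ℕ => Real.sqrt ((Kdisc μ N + 2).det / |(Kdisc μ N - 1).det|))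
      Filter.atTop
      (nhds (Real.sinh (Real.pi * Real.sqrt (2 / μ)) /
        Real.sin (Real.pi * Real.sqrt (1 / μ)))) := by
  have hμ0 : (0 : ℝ) < μ := by linarith
  have hb2 : 0 < Real.sqrt (2 / μ) := Real.sqrt_pos.mpr (by positivity)
  have hb1 : 0 < Real.sqrt (1 / μ) := Real.sqrt_pos.mpr (by positivity)
  have hb1lt : Real.sqrt (1 / μ) < 1 := by
    rw [show (Real.sqrt (1 / μ) < 1) ↔ (1 / μ < 1 ^ 2) from Real.sqrt_lt' one_pos]
    rw [one_pow, div_lt_one hμ0]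
    exact hμ
  have hdA : HasDerivAt Real.arsinh 1 0 := by
    have := Real.hasDerivAt_arsinh 0
    norm_num at this
    exact this
  have hdB : HasDerivAt Real.arcsin 1 0 := by
    have := Real.hasDerivAt_arcsin (by norm_num : (0:ℝ) ≠ -1) (by norm_num : (0:ℝ) ≠ 1)
    norm_num at this
    exact this
  have hA := DetAux.tendsto_mul_slope Real.arsinh hdA Real.arsinh_zero _ hb2
  have hB := DetAux.tendsto_mul_slope Real.arcsin hdB Real.arcsin_zero _ hb1
  have hsinh : Filter.Tendsto
      (fun N : ℕ => Real.sinh ((N : ℝ) * Real.arsinh (Real.sqrt (2 / μ) * Real.sin (Real.pi / N))))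
      Filter.atTop (nhds (Real.sinh (Real.pi * Real.sqrt (2 / μ)))) :=
    (Real.continuous_sinh.tendsto _).comp hA
  have hsin : Filter.Tendsto
      (fun N : ℕ => Real.sin ((N : ℝ) * Real.arcsin (Real.sqrt (1 / μ) * Real.sin (Real.pi / N))))
      Filter.atTop (nhds (Real.sin (Real.pi * Real.sqrt (1 / μ)))) :=
    (Real.continuous_sin.tendsto _).comp hB
  have hsinpos : 0 < Real.sin (Real.pi * Real.sqrt (1 / μ)) :=
    Real.sin_pos_of_pos_of_lt_pi (by positivity)
      (mul_lt_of_lt_one_right Real.pi_pos hb1lt)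
  have hsinhpos : 0 < Real.sinh (Real.pi * Real.sqrt (2 / μ)) :=
    Real.sinh_pos_iff.mpr (by positivity)
  have hdiv := hsinh.div hsin (ne_of_gt hsinpos)
  have habs := hdiv.abs
  rw [abs_of_pos (div_pos hsinhpos hsinpos)] at habs
  apply habs.congr'
  filter_upwards [Filter.eventually_ge_atTop 2] with N hN
  have hs := DetAux.sin_div_pos hN
  have hc : 0 < μ / (4 * Real.sin (Real.pi / N) ^ 2) :=
    div_pos hμ0 (mul_pos (by norm_num) (pow_pos hs 2))
  have hcN4 : 0 < (μ / (4 * Real.sin (Real.pi / N) ^ 2)) ^ N * 4 :=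
    mul_pos (pow_pos hc N) (by norm_num)
  rw [DetAux.detK_plus2 μ hμ hN, DetAux.detK_minus1 μ hμ hN, abs_neg,
    abs_of_nonneg (mul_nonneg (le_of_lt hcN4) (sq_nonneg _)),
    mul_div_mul_left _ _ (ne_of_gt hcN4), ← div_pow, Real.sqrt_sq_eq_abs]
  simp [Pi.div_apply]
end
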